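/- arXiv:1705.06423 — 2 statements merged into one kernel-verified Lean document; each statement's English description precedes it below -/
import Mathlib

section
/- Let G be a graph from the list L with vertex set V labeled by the standard convention, bundle B, and A ∈ A(G). Then every cover relation I ⋖ J in P^even_{G,A} with |J ∖ I| ≥ 3 satisfies 1 ≤ |(J ∖ I) ∩ V| ≤ 2, |(J ∖ I) ∩ (V ∖ {1,2})| ≤ 1, and 1 ≤ |(J ∖ I) ∩ B| ≤ 2. -/
open Classical

set_option maxHeartbeats 1000000

/-- A finite multigraph without loops: `fst e` and `snd e` are the two (distinct)
endpoints of the edge `e`. -/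
structure Multigraph where
  V : Type
  E : Type
  [fintypeV : Fintype V]
  [decEqV : DecidableEq V]
  [fintypeE : Fintype E]
  [decEqE : DecidableEq E]
  fst : E → V
  snd : E → V
  no_loop : ∀ e, fst e ≠ snd e

attribute [instance] Multigraph.fintypeV Multigraph.decEqV Multigraph.fintypeE Multigraph.decEqE

namespace Multigraph

variable (G : Multigraph)

/-- The ground set: vertices together with edges. -/
abbrev El : Type := G.V ⊕ G.E

/-- Two edges have the same (unordered) pair of endpoints. -/
def sameEnds (e e' : G.E) : Prop :=
  (G.fst e = G.fst e' ∧ G.snd e = G.snd e') ∨ (G.fst e = G.snd e' ∧ G.snd e = G.fst e')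

/-- An edge is a multiple edge if some other edge has the same endpoints. -/
def Multiple (e : G.E) : Prop := ∃ e', e' ≠ e ∧ G.sameEnds e e'

/-- A simple graph has no multiple edges. -/
def Simple : Prop := ∀ e, ¬ G.Multiple e

/-- A bundle: a maximal set of multiple edges with the same pair of endpoints. -/
def IsBundle (B : Set G.E) : Prop := ∃ e, G.Multiple e ∧ B = {e' | G.sameEnds e e'}

/-- Adjacency of vertices. -/
def adj (u v : G.V) : Prop :=
  ∃ e, (G.fst e = u ∧ G.snd e = v) ∨ (G.fst e = v ∧ G.snd e = u)

def reachable : G.V → G.V → Prop := Relation.ReflTransGen G.adj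

def Connected : Prop := Nonempty G.V ∧ ∀ u v : G.V, G.reachable u v

/-- Existence of a walk of length exactly `k`. -/
def reachN (G : Multigraph) : ℕ → G.V → G.V → Prop
  | 0, u, v => u = v
  | k + 1, u, v => ∃ w, G.adj u w ∧ G.reachN k w v

/-- Graph distance. -/
noncomputable def dist (u v : G.V) : ℕ := sInf {k | G.reachN k u v}

def adjOn (W : Set G.V) (u v : G.V) : Prop := u ∈ W ∧ v ∈ W ∧ G.adj u v

/-- The set `W` of vertices induces a connected subgraph. -/
def ConnectedOn (W : Set G.V) : Prop :=
  ∀ u ∈ W, ∀ w ∈ W, Relation.ReflTransGen (G.adjOn W) u w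

/-- The subset of the ground set representing the whole graph:
all vertices together with all multiple edges. -/
def topSet : Set G.El := {x | ∀ e, x = Sum.inr e → G.Multiple e}

/-- `S ⊆ C_G` represents a semi-induced subgraph: its edges are multiple edges with both
endpoints among its vertices, and between any two of its vertices joined by a bundle of `G`
it contains at least one edge of the bundle (simple edges are implicitly included). -/
def SemiInduced (S : Set G.El) : Prop :=
  (∀ e, Sum.inr e ∈ S → G.Multiple e ∧ Sum.inl (G.fst e) ∈ S ∧ Sum.inl (G.snd e) ∈ S) ∧
  (∀ e, G.Multiple e → Sum.inl (G.fst e) ∈ S → Sum.inl (G.snd e) ∈ S →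
    ∃ e', G.sameEnds e e' ∧ Sum.inr e' ∈ S)

/-- Adjacency of two vertices inside the semi-induced subgraph represented by `S`. -/
def adjIn (S : Set G.El) (u v : G.V) : Prop :=
  Sum.inl u ∈ S ∧ Sum.inl v ∈ S ∧
    ∃ e, ((G.fst e = u ∧ G.snd e = v) ∨ (G.fst e = v ∧ G.snd e = u)) ∧
      (G.Multiple e → Sum.inr e ∈ S)

/-- The connected component of the vertex `v` inside the semi-induced subgraph `S`,
as a subset of the ground set. -/
def componentIn (S : Set G.El) (v : G.V) : Set G.El :=
  {x | (∃ u, x = Sum.inl u ∧ Relation.ReflTransGen (G.adjIn S) v u) ∨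
       (∃ e, x = Sum.inr e ∧ Sum.inr e ∈ S ∧ Relation.ReflTransGen (G.adjIn S) v (G.fst e))}

/-- `S` is an `A`-even semi-induced subgraph. -/
def AEvenMember (A S : Set G.El) : Prop :=
  G.SemiInduced S ∧ ∀ v, Sum.inl v ∈ S → Even ((G.componentIn S v ∩ A).ncard)

/-- `A` is an admissible collection for `G`. -/
def Admissible (A : Set G.El) : Prop :=
  (∀ e, Sum.inr e ∈ A → G.Multiple e) ∧
  (∀ v : G.V, Even ({u : G.V | G.reachable v u ∧ Sum.inl u ∈ A}.ncard)) ∧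
  (∀ v : G.V, (∀ e, (G.fst e = v ∨ G.snd e = v) → ¬ G.Multiple e) → Sum.inl v ∈ A) ∧
  (∀ e, G.Multiple e →
    (∃ e', G.sameEnds e e' ∧ Sum.inr e' ∈ A) ∧
      Even ({e' | G.sameEnds e e' ∧ Sum.inr e' ∈ A}.ncard))

end Multigraph

/-- The poset of `A`-even semi-induced subgraphs of `G`, including `∅` and `G` itself,
ordered by containment. -/
def EvenPoset (G : Multigraph) (A : Set G.El) : Type :=
  {S : Set G.El // S = ∅ ∨ S = G.topSet ∨ G.AEvenMember A S}

namespace EvenPoset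

instance (G : Multigraph) (A : Set G.El) : PartialOrder (EvenPoset G A) :=
  Subtype.partialOrder _

instance (G : Multigraph) (A : Set G.El) : BoundedOrder (EvenPoset G A) where
  top := ⟨G.topSet, Or.inr (Or.inl rfl)⟩
  le_top := by
    rintro ⟨S, hS⟩
    show S ⊆ G.topSet
    rcases hS with rfl | rfl | hS
    · exact Set.empty_subset _
    · exact subset_rfl
    · intro x hx
      intro e he
      subst he
      exact (hS.1.1 e hx).1
  bot := ⟨(∅ : Set G.El), Or.inl rfl⟩
  bot_le := by
    rintro ⟨S, hS⟩
    show (∅ : Set G.El) ⊆ S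
    exact Set.empty_subset _

end EvenPoset
/-- An isomorphism of multigraphs. -/
structure Multigraph.Iso (G H : Multigraph) where
  vEquiv : G.V ≃ H.V
  eEquiv : G.E ≃ H.E
  ends : ∀ e, (H.fst (eEquiv e) = vEquiv (G.fst e) ∧ H.snd (eEquiv e) = vEquiv (G.snd e)) ∨
              (H.fst (eEquiv e) = vEquiv (G.snd e) ∧ H.snd (eEquiv e) = vEquiv (G.fst e))

/-- The connected component of the vertex `v`, as a multigraph. -/
noncomputable def Multigraph.componentGraph (G : Multigraph) (v : G.V) : Multigraph where
  V := {u // G.reachable v u}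
  E := {e // G.reachable v (G.fst e)}
  fintypeV := Fintype.ofFinite _
  decEqV := fun a b => decidable_of_iff (a.1 = b.1) Subtype.ext_iff.symm
  fintypeE := Fintype.ofFinite _
  decEqE := fun a b => decidable_of_iff (a.1 = b.1) Subtype.ext_iff.symm
  fst := fun e => ⟨G.fst e.1, e.2⟩
  snd := fun e => ⟨G.snd e.1, Relation.ReflTransGen.tail e.2 ⟨e.1, Or.inl ⟨rfl, rfl⟩⟩⟩
  no_loop := fun e h => G.no_loop e.1 (congrArg Subtype.val h)

/-- A specification of a partial underlying induced subgraph (PI-graph) of `G`: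
a set `W` of vertices together with a set `R` of retained edges, such that every `G`-edge
between vertices of `W` has a parallel retained edge, and each bundle inside `W`
is either fully retained or replaced by a single (simple) edge. -/
structure PISpec (G : Multigraph) where
  W : Set G.V
  R : Set G.E
  endpoints_mem : ∀ e ∈ R, G.fst e ∈ W ∧ G.snd e ∈ W
  keeps : ∀ e, G.fst e ∈ W → G.snd e ∈ W → ∃ e' ∈ R, G.sameEnds e e'
  bundle_cond : ∀ e ∈ R, (∀ e', G.sameEnds e e' → e' ∈ R) ∨ (∀ e' ∈ R, G.sameEnds e e' → e' = e)

/-- The PI-graph determined by a `PISpec`. -/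
noncomputable def PISpec.toGraph {G : Multigraph} (s : PISpec G) : Multigraph where
  V := {v // v ∈ s.W}
  E := {e // e ∈ s.R}
  fintypeV := Fintype.ofFinite _
  decEqV := fun a b => decidable_of_iff (a.1 = b.1) Subtype.ext_iff.symm
  fintypeE := Fintype.ofFinite _
  decEqE := fun a b => decidable_of_iff (a.1 = b.1) Subtype.ext_iff.symm
  fst := fun e => ⟨G.fst e.1, (s.endpoints_mem e.1 e.2).1⟩
  snd := fun e => ⟨G.snd e.1, (s.endpoints_mem e.1 e.2).2⟩
  no_loop := fun e h => G.no_loop e.1 (congrArg Subtype.val h)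

section Shelling

variable {α : Type*}

/-- A finset is a chain of the poset. -/
def IsChainFinset [Preorder α] (s : Finset α) : Prop :=
  ∀ x ∈ s, ∀ y ∈ s, x ≤ y ∨ y ≤ x

/-- The order complex of a poset: the complex of its chains. -/
def orderComplex (α : Type*) [Preorder α] : Set (Finset α) := {s | IsChainFinset s}

/-- A facet (maximal face) of a simplicial complex. -/
def IsFacet (K : Set (Finset α)) (F : Finset α) : Prop :=
  F ∈ K ∧ ∀ F' ∈ K, F ⊆ F' → F = F'

/-- `l` is a shelling order of the complex `K` (nonpure shellability of Björner–Wachs):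
it enumerates the facets of `K` so that for every `k ≥ 1`, the intersection of the `k`-th
facet with the union of the earlier ones is pure of dimension `dim F_k - 1`. -/
def IsShelling (K : Set (Finset α)) (l : List (Finset α)) : Prop :=
  l.Nodup ∧ (∀ F, F ∈ l ↔ IsFacet K F) ∧
  ∀ k (hk : k < l.length), 1 ≤ k →
    ∀ S : Finset α, S ⊆ l.get ⟨k, hk⟩ →
      (∃ i, ∃ hi : i < l.length, i < k ∧ S ⊆ l.get ⟨i, hi⟩) →
      ∃ T : Finset α, T ⊆ l.get ⟨k, hk⟩ ∧ T.card + 1 = (l.get ⟨k, hk⟩).card ∧ S ⊆ T ∧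
        ∃ i, ∃ hi : i < l.length, i < k ∧ T ⊆ l.get ⟨i, hi⟩

def ComplexShellable (K : Set (Finset α)) : Prop := ∃ l, IsShelling K l

/-- A poset is shellable if its order complex is shellable. -/
def PosetShellable (α : Type*) [Preorder α] : Prop := ComplexShellable (orderComplex α)

end Shelling

/-- The family `𝒢*`: all graphs `G` such that the poset of `A`-even subgraphs is shellable
for every PI-graph `H` of `G` and every admissible collection `A` of `H`. -/
def GStar (G : Multigraph) : Prop :=
  ∀ s : PISpec G, ∀ A : Set s.toGraph.El,
    s.toGraph.Admissible A → PosetShellable (EvenPoset s.toGraph A)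
/-- A graph on vertex set `Fin n` with a bundle of `m` parallel edges between the
vertices `0` and `1`, and `k` further simple edges given by the endpoint functions `f, g`. -/
def mkGraph (n m k : ℕ) (hn : 2 ≤ n) (f g : ℕ → ℕ)
    (hf : ∀ i, i < k → f i < n) (hg : ∀ i, i < k → g i < n)
    (hfg : ∀ i, i < k → f i ≠ g i) : Multigraph where
  V := Fin n
  E := Fin m ⊕ Fin k
  fst := Sum.elim (fun _ => ⟨0, by omega⟩) (fun i => ⟨f i.1, hf i.1 i.2⟩)
  snd := Sum.elim (fun _ => ⟨1, by omega⟩) (fun i => ⟨g i.1, hg i.1 i.2⟩)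
  no_loop := by
    rintro (e | e) h
    · have h0 : (0 : ℕ) = 1 := congrArg Fin.val h
      omega
    · exact hfg e.1 e.2 (congrArg Fin.val h)

/-- `P̃_{n+2,m}`: the path on `n+2` vertices `0,1,…,n+1` whose first edge is replaced by a
bundle of `m` parallel edges between `0` and `1`. -/
def tildeP (n m : ℕ) : Multigraph :=
  mkGraph (n + 2) m n (by omega) (fun i => i + 1) (fun i => i + 2)
    (fun i hi => by (try dsimp only); omega) (fun i hi => by (try dsimp only); omega) (fun i hi => by (try dsimp only); omega)

/-- `P̃′_{n+3,m}`: `P̃_{n+3,m}` with an extra simple edge `u₁u₃` (i.e. between `0` and `2`). -/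
def tildeP' (n m : ℕ) : Multigraph :=
  mkGraph (n + 3) m (n + 2) (by omega)
    (fun i => if i ≤ n then i + 1 else 0)
    (fun i => if i ≤ n then i + 2 else 2)
    (fun i hi => by (try dsimp only); split_ifs <;> omega)
    (fun i hi => by (try dsimp only); split_ifs <;> omega)
    (fun i hi => by (try dsimp only); split_ifs <;> omega)

/-- `S̃_{2j+5,m}`: the bundle `0,1`, the path `1,2,…,2j+3`, and a pendant vertex `2j+4`
attached to `2j+2`. -/
def tildeS (j m : ℕ) : Multigraph :=
  mkGraph (2*j + 5) m (2*j + 3) (by omega)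
    (fun i => if i < 2*j + 2 then i + 1 else 2*j + 2)
    (fun i => if i < 2*j + 2 then i + 2 else 2*j + 4)
    (fun i hi => by (try dsimp only); split_ifs <;> omega)
    (fun i hi => by (try dsimp only); split_ifs <;> omega)
    (fun i hi => by (try dsimp only); split_ifs <;> omega)

/-- `T̃_{2j+5,m}`: `S̃_{2j+5,m}` with the extra edge between `2j+3` and `2j+4`. -/
def tildeT (j m : ℕ) : Multigraph :=
  mkGraph (2*j + 5) m (2*j + 4) (by omega)
    (fun i => if i < 2*j + 2 then i + 1 else if i = 2*j + 2 then 2*j + 2 else 2*j + 3)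
    (fun i => if i < 2*j + 2 then i + 2 else 2*j + 4)
    (fun i hi => by (try dsimp only); split_ifs <;> omega)
    (fun i hi => by (try dsimp only); split_ifs <;> omega)
    (fun i hi => by (try dsimp only); split_ifs <;> omega)

/-- `S̃′_{2j+5,m}`: `S̃_{2j+5,m}` with an extra simple edge between `0` and `2`. -/
def tildeS' (j m : ℕ) : Multigraph :=
  mkGraph (2*j + 5) m (2*j + 4) (by omega)
    (fun i => if i < 2*j + 2 then i + 1 else if i = 2*j + 2 then 2*j + 2 else 0)
    (fun i => if i < 2*j + 2 then i + 2 else if i = 2*j + 2 then 2*j + 4 else 2)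
    (fun i hi => by (try dsimp only); split_ifs <;> omega)
    (fun i hi => by (try dsimp only); split_ifs <;> omega)
    (fun i hi => by (try dsimp only); split_ifs <;> omega)

/-- `T̃′_{2j+5,m}`: `T̃_{2j+5,m}` with an extra simple edge between `0` and `2`. -/
def tildeT' (j m : ℕ) : Multigraph :=
  mkGraph (2*j + 5) m (2*j + 5) (by omega)
    (fun i => if i < 2*j + 2 then i + 1 else if i = 2*j + 2 then 2*j + 2 else
      if i = 2*j + 3 then 2*j + 3 else 0)
    (fun i => if i < 2*j + 2 then i + 2 else if i ≤ 2*j + 3 then 2*j + 4 else 2)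
    (fun i hi => by (try dsimp only); split_ifs <;> omega)
    (fun i hi => by (try dsimp only); split_ifs <;> omega)
    (fun i hi => by (try dsimp only); split_ifs <;> omega)

/-- `G` is isomorphic to one of the unprimed graphs `P̃`, `S̃`, `T̃` of the list `L`. -/
def InL0 (G : Multigraph) : Prop :=
  ∃ m, 2 ≤ m ∧
    ((∃ n, Nonempty (G.Iso (tildeP n m))) ∨ (∃ j, Nonempty (G.Iso (tildeS j m))) ∨
      (∃ j, Nonempty (G.Iso (tildeT j m))))

/-- `G` is isomorphic to one of the primed graphs `P̃′`, `S̃′`, `T̃′` of the list `L`. -/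
def InL1 (G : Multigraph) : Prop :=
  ∃ m, 2 ≤ m ∧
    ((∃ n, Nonempty (G.Iso (tildeP' n m))) ∨ (∃ j, Nonempty (G.Iso (tildeS' j m))) ∨
      (∃ j, Nonempty (G.Iso (tildeT' j m))))

/-- `G` is isomorphic to one of the graphs of the list `L`. -/
def InListL (G : Multigraph) : Prop := InL0 G ∨ InL1 G
section CL

variable (P : Type*) [PartialOrder P]

/-- `c` is a saturated chain from `x` to `y`: consecutive elements are covers. -/
def SatChain (x y : P) (c : List P) : Prop :=
  c.Chain' (· ⋖ ·) ∧ c.head? = some x ∧ c.getLast? = some y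

variable [BoundedOrder P]

/-- A maximal chain of the bounded poset `P`. -/
def MaxChain : Type _ := {c : List P // SatChain P ⊥ ⊤ c}

variable {P}

/-- The maximal chain `σ` extends the root `r` (a saturated chain from `⊥` to some `x`)
followed by the saturated chain `c` (from `x` to some `y`). -/
def ChainExtends (σ : MaxChain P) (r c : List P) : Prop := (r ++ c.tail) <+: σ.1

/-- A chain-edge labeling: two maximal chains that coincide along their bottom `d` covers
receive the same labels on those covers. `lab σ i` is the label of the `i`-th cover
of the maximal chain `σ`. -/
def IsChainEdgeLabeling {L : Type} [PartialOrder L] (lab : MaxChain P → ℕ → L) : Prop :=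
  ∀ σ τ : MaxChain P, ∀ d : ℕ, σ.1.take (d + 1) = τ.1.take (d + 1) →
    ∀ i, i < d → lab σ i = lab τ i

/-- The chain `c` of the interval rooted at `r` is strictly increasing with respect
to the labeling `lab`. -/
def SegIncreasing {L : Type} [PartialOrder L] (lab : MaxChain P → ℕ → L)
    (r c : List P) : Prop :=
  ∃ σ : MaxChain P, ChainExtends σ r c ∧
    ∀ i, r.length ≤ i + 1 → i + 4 ≤ r.length + c.length → lab σ i < lab σ (i + 1)

/-- The sequence of labels of the covers of the chain `c` in the interval rooted at `r`,
read off along the extending maximal chain `σ`. -/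
def SegLabels {L : Type} (lab : MaxChain P → ℕ → L) (σ : MaxChain P)
    (r c : List P) : List L :=
  (List.range (c.length - 1)).map fun i => lab σ (r.length - 1 + i)

/-- A CL-labeling: a chain-edge labeling such that in every rooted interval there is a
unique strictly increasing maximal chain, and it lexicographically precedes all other
maximal chains of the rooted interval. -/
def IsCLLabeling {L : Type} [PartialOrder L] (lab : MaxChain P → ℕ → L) : Prop :=
  IsChainEdgeLabeling lab ∧
  ∀ x y : P, x ≤ y → ∀ r : List P, SatChain P ⊥ x r →
    ∃ c : List P, SatChain P x y c ∧ SegIncreasing lab r c ∧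
      ∀ c' : List P, SatChain P x y c' → c' ≠ c →
        ¬ SegIncreasing lab r c' ∧
        ∀ σ σ' : MaxChain P, ChainExtends σ r c → ChainExtends σ' r c' →
          List.Lex (· < ·) (SegLabels lab σ r c) (SegLabels lab σ' r c')

/-- A bounded poset is CL-shellable if it admits a CL-labeling. -/
def CLShellable (P : Type*) [PartialOrder P] [BoundedOrder P] : Prop :=
  ∃ (L : Type) (_ : LinearOrder L) (lab : MaxChain P → ℕ → L), IsCLLabeling lab

end CL

/-- `IntervalRAO x y l`: the list `l` is a recursive atom ordering of the interval `[x,y]`. -/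
inductive IntervalRAO {P : Type*} [PartialOrder P] : P → P → List P → Prop where
  | base : ∀ {x y : P}, x ⋖ y → IntervalRAO x y [y]
  | step : ∀ {x y : P} (l : List P) (ls : ℕ → List P), x < y → ¬ x ⋖ y → l.Nodup →
      (∀ z, z ∈ l ↔ (x ⋖ z ∧ z ≤ y)) →
      (∀ j, ∀ hj : j < l.length, IntervalRAO (l.get ⟨j, hj⟩) y (ls j)) →
      (∀ j, j < l.length →
        ∃ d, ∀ k, ∀ hk : k < (ls j).length,
          (k < d ↔ ∃ i, ∃ hi : i < l.length, i < j ∧ l.get ⟨i, hi⟩ ≤ (ls j).get ⟨k, hk⟩)) →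
      (∀ i j, ∀ hi : i < l.length, ∀ hj : j < l.length, i < j →
        ∀ w, l.get ⟨i, hi⟩ ≤ w → l.get ⟨j, hj⟩ ≤ w → w ≤ y →
          ∃ k, k < j ∧ ∃ hk : k < l.length, ∃ z, l.get ⟨j, hj⟩ ⋖ z ∧ z ≤ w ∧
            l.get ⟨k, hk⟩ < z) →
      IntervalRAO x y l

/-- A bounded poset admits a recursive atom ordering. -/
def HasRAO (P : Type*) [PartialOrder P] [BoundedOrder P] : Prop :=
  ∃ l : List P, IntervalRAO (⊥ : P) ⊤ l
/-- The standard labeling convention for a graph `G` of the list `L` together with an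
admissible collection `A`: the vertices are `v 1, …, v n` with the bundle between
`v 1` and `v 2`, the elements of `B ∩ A` are `ea 1, …, ea twoM`, the elements of
`B ∖ A` are `eb 1, …, eb ell`, each vertex `v i` (`i ≥ 3`) is closest to `v (i-1)`,
`v 1 ∉ A` when `n` is odd, and `v 1` is adjacent to `v 3` when `n` is even. -/
structure StdLabeling (G : Multigraph) (A : Set G.El) where
  n : ℕ
  twoM : ℕ
  ell : ℕ
  hn : 2 ≤ n
  v : ℕ → G.V
  ea : ℕ → G.E
  eb : ℕ → G.E
  vbij : Set.BijOn v (Set.Icc 1 n) Set.univ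
  eabij : Set.BijOn ea (Set.Icc 1 twoM) {e | G.Multiple e ∧ Sum.inr e ∈ A}
  ebbij : Set.BijOn eb (Set.Icc 1 ell) {e | G.Multiple e ∧ Sum.inr e ∉ A}
  bundleEnds : ∀ e, G.Multiple e ↔
    ((G.fst e = v 1 ∧ G.snd e = v 2) ∨ (G.fst e = v 2 ∧ G.snd e = v 1))
  closest : ∀ i, 3 ≤ i → i ≤ n → ∀ j, i ≤ j → j ≤ n →
    G.dist (v (i - 1)) (v i) ≤ G.dist (v (i - 1)) (v j)
  oddA : Odd n → Sum.inl (v 1) ∉ A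
  evenAdj : Even n → 3 ≤ n → G.adj (v 1) (v 3)

namespace StdLabeling

variable {G : Multigraph} {A : Set G.El} (L : StdLabeling G A)

/-- The label of a vertex. -/
noncomputable def vIdx (w : G.V) : ℕ := sInf {i | 1 ≤ i ∧ i ≤ L.n ∧ L.v i = w}

/-- The index of an edge of `B ∩ A`. -/
noncomputable def aIdx (e : G.E) : ℕ := sInf {i | 1 ≤ i ∧ i ≤ L.twoM ∧ L.ea i = e}

/-- The index of an edge of `B ∖ A`. -/
noncomputable def bIdx (e : G.E) : ℕ := sInf {i | 1 ≤ i ∧ i ≤ L.ell ∧ L.eb i = e}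

/-- The rank of a ground element in the total order `≺_I` on `V ∪ B`. -/
noncomputable def rank (I : Set G.El) : G.El → ℕ :=
  if ∀ e : G.E, Sum.inr e ∉ I then
    Sum.elim (fun w => L.vIdx w)
      (fun e => if Sum.inr e ∈ A then L.n + L.aIdx e else L.n + L.twoM + L.bIdx e)
  else if ∀ e : G.E, Sum.inr e ∈ I → Sum.inr e ∈ A then
    Sum.elim
      (fun w => if L.vIdx w ≤ 2 then L.vIdx w
        else sSup {i | 1 ≤ i ∧ i ≤ L.twoM ∧ Sum.inr (L.ea i) ∈ I} + L.vIdx w)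
      (fun e => if Sum.inr e ∈ A then
          (if L.aIdx e ≤ sSup {i | 1 ≤ i ∧ i ≤ L.twoM ∧ Sum.inr (L.ea i) ∈ I}
            then 2 + L.aIdx e else L.n + L.aIdx e)
        else L.n + L.twoM + L.bIdx e)
  else
    Sum.elim
      (fun w => if L.vIdx w ≤ 2 then L.vIdx w
        else L.twoM + sSup {i | 1 ≤ i ∧ i ≤ L.ell ∧ Sum.inr (L.eb i) ∈ I} + L.vIdx w)
      (fun e => if Sum.inr e ∈ A then 2 + L.aIdx e
        else (if L.bIdx e ≤ sSup {i | 1 ≤ i ∧ i ≤ L.ell ∧ Sum.inr (L.eb i) ∈ I}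
          then 2 + L.twoM + L.bIdx e else L.n + L.twoM + L.bIdx e))

end StdLabeling

/-- The set `S` lexicographically precedes the set `T`, comparing the sorted sequences of
ranks of their elements. -/
noncomputable def setLex {G : Multigraph} (f : G.El → ℕ) (S T : Set G.El) : Prop :=
  List.Lex (· < ·)
    (Finset.sort (Finset.image f (Set.toFinite S).toFinset) (· ≤ ·))
    (Finset.sort (Finset.image f (Set.toFinite T).toFinset) (· ≤ ·))

namespace StdLabeling

variable {G : Multigraph} {A : Set G.El} (L : StdLabeling G A)

/-- The pair of endpoints of the bundle, as ground-set elements. -/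
def v12set : Set G.El := {Sum.inl (L.v 1), Sum.inl (L.v 2)}

/-- The atom ordering `J ≺_atom^I J'` of the atoms of the interval `[I, G]`. -/
noncomputable def atomPrec (I J J' : EvenPoset G A) : Prop :=
  (((J.1 \ I.1) ∩ L.v12set).ncard = 1 ∧ ((J'.1 \ I.1) ∩ L.v12set).ncard = 2) ∨
    setLex (L.rank I.1) (J.1 \ I.1) (J'.1 \ I.1)

/-- `c` is a falling maximal chain of the poset of `A`-even subgraphs, with respect to the
integer CL-labeling obtained from the recursive atom orderings `≺_atom` by the standard
Björner–Wachs construction: a maximal chain is falling iff each element `x_{t+1}` of the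
chain lies above an atom of `[x_{t-1}, ⊤]` that precedes `x_t` in `≺_atom^{x_{t-1}}`. -/
noncomputable def Falling (c : List (EvenPoset G A)) : Prop :=
  SatChain (EvenPoset G A) ⊥ ⊤ c ∧
  ∀ t, ∀ _ : 1 ≤ t, ∀ h2 : t + 1 < c.length,
    ∃ z : EvenPoset G A,
      c.get ⟨t - 1, by omega⟩ ⋖ z ∧
      L.atomPrec (c.get ⟨t - 1, by omega⟩) z (c.get ⟨t, by omega⟩) ∧
      z ≤ c.get ⟨t + 1, h2⟩

end StdLabeling
/-- `e` is an element of `B ∩ A` (a multiple edge belonging to `A`). -/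
def Multigraph.inBA (G : Multigraph) (A : Set G.El) (e : G.E) : Prop :=
  G.Multiple e ∧ Sum.inr e ∈ A

/-- `e` is an element of `B ∖ A` (a multiple edge not belonging to `A`). -/
def Multigraph.inBnA (G : Multigraph) (A : Set G.El) (e : G.E) : Prop :=
  G.Multiple e ∧ Sum.inr e ∉ A

/-- `i` is the index of the smallest-labelled vertex outside `I ∪ {v 1, v 2}`,
i.e. `v i = min (V ∖ (I ∪ {1,2}))`. -/
def StdLabeling.vminP {G : Multigraph} {A : Set G.El} (L : StdLabeling G A)
    (I : Set G.El) (i : ℕ) : Prop :=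
  3 ≤ i ∧ i ≤ L.n ∧ Sum.inl (L.v i) ∉ I ∧ ∀ j, 3 ≤ j → j < i → Sum.inl (L.v j) ∈ I


/-! ### Auxiliary lemmas for the cover theorem -/

section CoverAux

variable {G : Multigraph}

lemma CP.adjIn_symm {S : Set G.El} {u v : G.V} (h : G.adjIn S u v) : G.adjIn S v u := by
  obtain ⟨hu, hv, e, hor, hm⟩ := h
  exact ⟨hv, hu, e, hor.symm, hm⟩

lemma CP.adjIn_mono {S T : Set G.El} (hST : S ⊆ T) {u v : G.V} (h : G.adjIn S u v) :
    G.adjIn T u v := by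
  obtain ⟨hu, hv, e, hor, hm⟩ := h
  exact ⟨hST hu, hST hv, e, hor, fun hmul => hST (hm hmul)⟩

lemma CP.reach_symm {S : Set G.El} {u v : G.V}
    (h : Relation.ReflTransGen (G.adjIn S) u v) : Relation.ReflTransGen (G.adjIn S) v u :=
  (@Relation.ReflTransGen.stdSymm _ _ ⟨fun _ _ hxy => CP.adjIn_symm hxy⟩).symm _ _ h

lemma CP.reach_mono {S T : Set G.El} (hST : S ⊆ T) {u v : G.V}
    (h : Relation.ReflTransGen (G.adjIn S) u v) : Relation.ReflTransGen (G.adjIn T) u v :=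
  Relation.ReflTransGen.mono (fun _ _ hxy => CP.adjIn_mono hST hxy) _ _ h

lemma CP.mem_componentIn_inl {S : Set G.El} {v u : G.V} :
    Sum.inl u ∈ G.componentIn S v ↔ Relation.ReflTransGen (G.adjIn S) v u := by
  constructor
  · rintro (⟨u', h1, h2⟩ | ⟨e, h1, _⟩)
    · cases h1; exact h2
    · cases h1
  · intro h; exact Or.inl ⟨u, rfl, h⟩

lemma CP.mem_componentIn_inr {S : Set G.El} {v : G.V} {e : G.E} :
    Sum.inr e ∈ G.componentIn S v ↔
      Sum.inr e ∈ S ∧ Relation.ReflTransGen (G.adjIn S) v (G.fst e) := by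
  constructor
  · rintro (⟨u', h1, _⟩ | ⟨e', h1, h2, h3⟩)
    · cases h1
    · cases h1; exact ⟨h2, h3⟩
  · intro h; exact Or.inr ⟨e, rfl, h.1, h.2⟩

lemma CP.reach_mem {S : Set G.El} {v u : G.V} (hv : Sum.inl v ∈ S)
    (h : Relation.ReflTransGen (G.adjIn S) v u) : Sum.inl u ∈ S := by
  induction h with
  | refl => exact hv
  | tail _ h2 _ => exact h2.2.1

lemma CP.componentIn_subset {S : Set G.El} {v : G.V} (hv : Sum.inl v ∈ S) :
    G.componentIn S v ⊆ S := by
  rintro x (⟨u, rfl, h⟩ | ⟨e, rfl, h1, _⟩)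
  · exact CP.reach_mem hv h
  · exact h1

/-- An element of the component of `a` that also lies in the component of `v` forces the whole
component of `a` to lie in the component of `v`. -/
lemma CP.componentIn_trans {S : Set G.El} {v a : G.V} {x y : G.El}
    (hx : x ∈ G.componentIn S a) (hxv : x ∈ G.componentIn S v)
    (hy : y ∈ G.componentIn S a) : y ∈ G.componentIn S v := by
  have hva : Relation.ReflTransGen (G.adjIn S) v a := by
    rcases x with u | e
    · exact (CP.mem_componentIn_inl.mp hxv).trans (CP.reach_symm (CP.mem_componentIn_inl.mp hx))
    · exact ((CP.mem_componentIn_inr.mp hxv).2).trans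
        (CP.reach_symm (CP.mem_componentIn_inr.mp hx).2)
  rcases y with u | e
  · exact CP.mem_componentIn_inl.mpr (hva.trans (CP.mem_componentIn_inl.mp hy))
  · obtain ⟨h1, h2⟩ := CP.mem_componentIn_inr.mp hy
    exact CP.mem_componentIn_inr.mpr ⟨h1, hva.trans h2⟩

/-- A union of components of an `A`-even set has even intersection with `A`. -/
lemma CP.even_closed (A : Set G.El) {Iset : Set G.El}
    (hsi : ∀ e, Sum.inr e ∈ Iset → Sum.inl (G.fst e) ∈ Iset)
    (hev : ∀ v, Sum.inl v ∈ Iset → Even ((G.componentIn Iset v ∩ A).ncard)) :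
    ∀ (X : Set G.El), X ⊆ Iset →
    (∀ u w, Sum.inl u ∈ X → G.adjIn Iset u w → Sum.inl w ∈ X) →
    (∀ e, Sum.inr e ∈ Iset → (Sum.inr e ∈ X ↔ Sum.inl (G.fst e) ∈ X)) →
    Even ((X ∩ A).ncard) := by
  suffices H : ∀ (n : ℕ) (X : Set G.El), X.ncard ≤ n → X ⊆ Iset →
      (∀ u w, Sum.inl u ∈ X → G.adjIn Iset u w → Sum.inl w ∈ X) →
      (∀ e, Sum.inr e ∈ Iset → (Sum.inr e ∈ X ↔ Sum.inl (G.fst e) ∈ X)) →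
      Even ((X ∩ A).ncard) by
    intro X hXI h1 h2; exact H X.ncard X le_rfl hXI h1 h2
  intro n
  induction n with
  | zero =>
    intro X hle _ _ _
    have : X = ∅ := (Set.ncard_eq_zero (Set.toFinite X)).mp (Nat.le_antisymm hle (Nat.zero_le _))
    simp [this]
  | succ n ih =>
    intro X hle hXI h1 h2
    by_cases hvx : ∃ u, Sum.inl u ∈ X
    · obtain ⟨u, hu⟩ := hvx
      set C := G.componentIn Iset u with hC
      have hCvert : ∀ w, Relation.ReflTransGen (G.adjIn Iset) u w → Sum.inl w ∈ X := by
        intro w hw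
        induction hw with
        | refl => exact hu
        | tail _ hstep ih' => exact h1 _ _ ih' hstep
      have hCX : C ⊆ X := by
        rintro x (⟨w, rfl, hw⟩ | ⟨e, rfl, he1, he2⟩)
        · exact hCvert w hw
        · exact (h2 e he1).mpr (hCvert _ he2)
      have hXsplit : X ∩ A = (C ∩ A) ∪ ((X \ C) ∩ A) := by
        rw [← Set.union_inter_distrib_right, Set.union_diff_cancel hCX]
      have hdisj : Disjoint (C ∩ A) ((X \ C) ∩ A) := by
        apply Set.disjoint_left.mpr
        rintro x ⟨hx1, _⟩ ⟨⟨_, hx2⟩, _⟩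
        exact hx2 hx1
      have huC : Sum.inl u ∈ C := CP.mem_componentIn_inl.mpr Relation.ReflTransGen.refl
      have hssub : X \ C ⊂ X := by
        constructor
        · exact Set.diff_subset
        · intro hsub
          exact (hsub hu).2 huC
      have hlt : (X \ C).ncard < X.ncard := Set.ncard_lt_ncard hssub (Set.toFinite X)
      have hE2 : Even (((X \ C) ∩ A).ncard) := by
        refine ih (X \ C) (by omega) (fun x hx => hXI hx.1) ?_ ?_
        · rintro x w ⟨hxX, hxC⟩ hadj
          refine ⟨h1 _ _ hxX hadj, fun hwC => hxC ?_⟩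
          exact CP.mem_componentIn_inl.mpr
            ((CP.mem_componentIn_inl.mp hwC).tail (CP.adjIn_symm hadj))
        · intro e he
          have hfstI : Sum.inl (G.fst e) ∈ Iset := hsi e he
          have heC : Sum.inr e ∈ C ↔ Sum.inl (G.fst e) ∈ C := by
            rw [CP.mem_componentIn_inl, CP.mem_componentIn_inr]
            exact ⟨fun h => h.2, fun h => ⟨he, h⟩⟩
          have := h2 e he
          constructor
          · rintro ⟨hx, hc⟩
            exact ⟨this.mp hx, fun hcc => hc (heC.mpr hcc)⟩
          · rintro ⟨hx, hc⟩
            exact ⟨this.mpr hx, fun hcc => hc (heC.mp hcc)⟩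
      have hE1 : Even ((C ∩ A).ncard) := hev u (hXI hu)
      rw [hXsplit, Set.ncard_union_eq hdisj (Set.toFinite _) (Set.toFinite _)]
      exact hE1.add hE2
    · have : X ∩ A = ∅ := by
        ext x
        simp only [Set.mem_inter_iff, Set.mem_empty_iff_false, iff_false, not_and]
        intro hx _
        rcases x with w | e
        · exact hvx ⟨w, hx⟩
        · exact hvx ⟨G.fst e, (h2 e (hXI hx)).mp hx⟩
      simp [this]

/-- Master parity-transfer lemma. -/
lemma CP.master (A : Set G.El) {Iset K : Set G.El} (hIK : Iset ⊆ K)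
    (hsiI : G.SemiInduced Iset)
    (hevI : ∀ v, Sum.inl v ∈ Iset → Even ((G.componentIn Iset v ∩ A).ncard))
    {v : G.V} (hv : Sum.inl v ∈ K) :
    (Even ((G.componentIn K v ∩ A).ncard) ↔
      Even ((G.componentIn K v ∩ (K \ Iset) ∩ A).ncard)) := by
  set C := G.componentIn K v with hCdef
  have hCK : C ⊆ K := CP.componentIn_subset hv
  have hsplit : C ∩ A = ((C ∩ Iset) ∩ A) ∪ ((C ∩ (K \ Iset)) ∩ A) := by
    ext x
    simp only [Set.mem_inter_iff, Set.mem_union, Set.mem_diff]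
    constructor
    · rintro ⟨hxC, hxA⟩
      by_cases hI : x ∈ Iset
      · exact Or.inl ⟨⟨hxC, hI⟩, hxA⟩
      · exact Or.inr ⟨⟨hxC, hCK hxC, hI⟩, hxA⟩
    · rintro (⟨⟨h, _⟩, hA⟩ | ⟨⟨h, _⟩, hA⟩) <;> exact ⟨h, hA⟩
  have hdisj : Disjoint ((C ∩ Iset) ∩ A) ((C ∩ (K \ Iset)) ∩ A) := by
    apply Set.disjoint_left.mpr
    rintro x ⟨⟨_, hx1⟩, _⟩ ⟨⟨_, _, hx2⟩, _⟩
    exact hx2 hx1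
  have hEI : Even (((C ∩ Iset) ∩ A).ncard) := by
    refine CP.even_closed A (fun e he => (hsiI.1 e he).2.1) hevI (C ∩ Iset)
      Set.inter_subset_right ?_ ?_
    · rintro u w ⟨huC, huI⟩ hadj
      refine ⟨?_, hadj.2.1⟩
      exact CP.mem_componentIn_inl.mpr
        ((CP.mem_componentIn_inl.mp huC).tail (CP.adjIn_mono hIK hadj))
    · intro e he
      have h1 : Sum.inr e ∈ C ↔ Relation.ReflTransGen (G.adjIn K) v (G.fst e) := by
        rw [CP.mem_componentIn_inr]
        exact ⟨fun h => h.2, fun h => ⟨hIK he, h⟩⟩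
      have h2 : Sum.inl (G.fst e) ∈ C ↔ Relation.ReflTransGen (G.adjIn K) v (G.fst e) :=
        CP.mem_componentIn_inl
      constructor
      · rintro ⟨hx, _⟩
        exact ⟨h2.mpr (h1.mp hx), (hsiI.1 e he).2.1⟩
      · rintro ⟨hx, _⟩
        exact ⟨h1.mpr (h2.mp hx), he⟩
  rw [hsplit, Set.ncard_union_eq hdisj (Set.toFinite _) (Set.toFinite _)]
  rw [Nat.even_add]
  constructor
  · intro h; exact (h.mp hEI)
  · intro h; exact iff_of_true hEI h

end CoverAux

section CoverCtx2

variable {G : Multigraph} {A : Set G.El}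

lemma CP.exists_mem_ne {α : Type*} [Finite α] {s : Set α} (h2 : 2 ≤ s.ncard) (x : α) :
    ∃ y ∈ s, y ≠ x := by
  by_contra h; push_neg at h
  have hsub : s ⊆ {x} := fun y hy => h y hy
  have := Set.ncard_le_ncard hsub (Set.toFinite _)
  rw [Set.ncard_singleton] at this
  omega

lemma CP.exists_mem_ne2 {α : Type*} [Finite α] {s : Set α} (h3 : 3 ≤ s.ncard) (x1 x2 : α) :
    ∃ y ∈ s, y ≠ x1 ∧ y ≠ x2 := by
  by_contra h; push_neg at h
  have hsub : s ⊆ {x1, x2} := by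
    intro y hy
    by_cases h1 : y = x1
    · exact Or.inl h1
    · exact Or.inr (h y hy h1)
  have h1 := Set.ncard_le_ncard hsub (Set.toFinite _)
  have h2 : ({x1, x2} : Set α).ncard ≤ 2 := by
    refine (Set.ncard_insert_le _ _).trans ?_
    rw [Set.ncard_singleton]
  omega

/-- Context for the cover theorem. -/
structure CP.Ctx (A : Set G.El) (I J : EvenPoset G A) (va vb : G.V) : Prop where
  hcov : I ⋖ J
  hIm : G.AEvenMember A I.1
  hJm : G.AEvenMember A J.1
  hBE : ∀ e, G.Multiple e ↔ ((G.fst e = va ∧ G.snd e = vb) ∨ (G.fst e = vb ∧ G.snd e = va))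
  hM : ∃ e, G.Multiple e
  hab : va ≠ vb
  h3 : 3 ≤ (J.1 \ I.1).ncard

variable {va vb : G.V}

lemma CP.fst_mem (hBE : ∀ e, G.Multiple e ↔
      ((G.fst e = va ∧ G.snd e = vb) ∨ (G.fst e = vb ∧ G.snd e = va)))
    {e : G.E} (he : G.Multiple e) : G.fst e = va ∨ G.fst e = vb := by
  rcases (hBE e).1 he with h | h
  · exact Or.inl h.1
  · exact Or.inr h.1

lemma CP.sameEnds_of_mult (hBE : ∀ e, G.Multiple e ↔
      ((G.fst e = va ∧ G.snd e = vb) ∨ (G.fst e = vb ∧ G.snd e = va)))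
    {e f : G.E} (he : G.Multiple e) (hf : G.Multiple f) : G.sameEnds e f := by
  rcases (hBE e).1 he with h1 | h1 <;> rcases (hBE f).1 hf with h2 | h2
  · exact Or.inl ⟨h1.1.trans h2.1.symm, h1.2.trans h2.2.symm⟩
  · exact Or.inr ⟨h1.1.trans h2.2.symm, h1.2.trans h2.1.symm⟩
  · exact Or.inr ⟨h1.1.trans h2.2.symm, h1.2.trans h2.1.symm⟩
  · exact Or.inl ⟨h1.1.trans h2.1.symm, h1.2.trans h2.2.symm⟩

lemma CP.mult_of_sameEnds {e f : G.E} (he : G.Multiple e) (hs : G.sameEnds e f) :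
    G.Multiple f := by
  by_cases hef : f = e
  · subst hef; exact he
  · refine ⟨e, Ne.symm hef, ?_⟩
    rcases hs with ⟨h1, h2⟩ | ⟨h1, h2⟩
    · exact Or.inl ⟨h1.symm, h2.symm⟩
    · exact Or.inr ⟨h2.symm, h1.symm⟩

lemma CP.orient (hBE : ∀ e, G.Multiple e ↔
      ((G.fst e = va ∧ G.snd e = vb) ∨ (G.fst e = vb ∧ G.snd e = va)))
    {e f : G.E} (he : G.Multiple e) (hf : G.Multiple f) {u w : G.V}
    (h : (G.fst e = u ∧ G.snd e = w) ∨ (G.fst e = w ∧ G.snd e = u)) :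
    (G.fst f = u ∧ G.snd f = w) ∨ (G.fst f = w ∧ G.snd f = u) := by
  rcases (hBE e).1 he with h1 | h1 <;> rcases (hBE f).1 hf with h2 | h2 <;>
    rcases h with h0 | h0 <;>
    first
      | exact Or.inl ⟨h2.1.trans (h0.1.symm.trans h1.1).symm,
          h2.2.trans (h0.2.symm.trans h1.2).symm⟩
      | exact Or.inr ⟨h2.1.trans (h0.1.symm.trans h1.1).symm,
          h2.2.trans (h0.2.symm.trans h1.2).symm⟩
      | exact Or.inl ⟨h2.1.trans (h0.2.symm.trans h1.2).symm,
          h2.2.trans (h0.1.symm.trans h1.1).symm⟩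
      | exact Or.inr ⟨h2.1.trans (h0.2.symm.trans h1.2).symm,
          h2.2.trans (h0.1.symm.trans h1.1).symm⟩

lemma CP.mkSemiInduced (hBE : ∀ e, G.Multiple e ↔
      ((G.fst e = va ∧ G.snd e = vb) ∨ (G.fst e = vb ∧ G.snd e = va)))
    {K : Set G.El} (h1 : ∀ e, Sum.inr e ∈ K → G.Multiple e)
    (h2 : ∀ e, Sum.inr e ∈ K → Sum.inl va ∈ K ∧ Sum.inl vb ∈ K)
    (h3 : Sum.inl va ∈ K → Sum.inl vb ∈ K → ∃ e, G.Multiple e ∧ Sum.inr e ∈ K) :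
    G.SemiInduced K := by
  constructor
  · intro e he
    refine ⟨h1 e he, ?_, ?_⟩
    · rcases (hBE e).1 (h1 e he) with h | h
      · rw [h.1]; exact (h2 e he).1
      · rw [h.1]; exact (h2 e he).2
    · rcases (hBE e).1 (h1 e he) with h | h
      · rw [h.2]; exact (h2 e he).2
      · rw [h.2]; exact (h2 e he).1
  · intro e hme hfe hse
    have hvab : Sum.inl va ∈ K ∧ Sum.inl vb ∈ K := by
      rcases (hBE e).1 hme with h | h
      · exact ⟨h.1 ▸ hfe, h.2 ▸ hse⟩
      · exact ⟨h.2 ▸ hse, h.1 ▸ hfe⟩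
    obtain ⟨f, hfm, hfK⟩ := h3 hvab.1 hvab.2
    exact ⟨f, CP.sameEnds_of_mult hBE hme hfm, hfK⟩

lemma CP.semiInduced_endpoints (hBE : ∀ e, G.Multiple e ↔
      ((G.fst e = va ∧ G.snd e = vb) ∨ (G.fst e = vb ∧ G.snd e = va)))
    {S : Set G.El} (hS : G.SemiInduced S) {e : G.E} (he : Sum.inr e ∈ S) :
    Sum.inl va ∈ S ∧ Sum.inl vb ∈ S := by
  obtain ⟨hm, hf, hs⟩ := hS.1 e he
  rcases (hBE e).1 hm with h | h
  · exact ⟨h.1 ▸ hf, h.2 ▸ hs⟩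
  · exact ⟨h.2 ▸ hs, h.1 ▸ hf⟩

lemma CP.P2 (hBE : ∀ e, G.Multiple e ↔
      ((G.fst e = va ∧ G.snd e = vb) ∨ (G.fst e = vb ∧ G.snd e = va)))
    {S : Set G.El} (hS : G.SemiInduced S) (hM : ∃ e, G.Multiple e)
    (hva : Sum.inl va ∈ S) (hvb : Sum.inl vb ∈ S) :
    ∃ e, G.Multiple e ∧ Sum.inr e ∈ S := by
  obtain ⟨e, he⟩ := hM
  have hf : Sum.inl (G.fst e) ∈ S ∧ Sum.inl (G.snd e) ∈ S := by
    rcases (hBE e).1 he with h | h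
    · exact ⟨h.1.symm ▸ hva, h.2.symm ▸ hvb⟩
    · exact ⟨h.1.symm ▸ hvb, h.2.symm ▸ hva⟩
  obtain ⟨e', hsame, he'S⟩ := hS.2 e he hf.1 hf.2
  exact ⟨e', CP.mult_of_sameEnds he hsame, he'S⟩

lemma CP.adjIn_ab (hBE : ∀ e, G.Multiple e ↔
      ((G.fst e = va ∧ G.snd e = vb) ∨ (G.fst e = vb ∧ G.snd e = va)))
    {S : Set G.El} (ha : Sum.inl va ∈ S) (hb : Sum.inl vb ∈ S) {f : G.E}
    (hfm : G.Multiple f) (hfS : Sum.inr f ∈ S) : G.adjIn S va vb :=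
  ⟨ha, hb, f, (hBE f).1 hfm, fun _ => hfS⟩

lemma CP.no_mid {I J : EvenPoset G A} (hcov : I ⋖ J) (K : Set G.El)
    (hIK : I.1 ⊆ K) (hKJ : K ⊆ J.1) {x : G.El} (hxK : x ∈ K) (hxI : x ∉ I.1)
    {y : G.El} (hyJ : y ∈ J.1) (hyK : y ∉ K) (hmem : G.AEvenMember A K) : False := by
  let z : EvenPoset G A := ⟨K, Or.inr (Or.inr hmem)⟩
  have h1 : I < z := by
    refine lt_of_le_of_ne ?_ ?_
    · exact hIK
    · intro h
      rw [h] at hxI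
      exact hxI hxK
  have h2 : z < J := by
    refine lt_of_le_of_ne ?_ ?_
    · exact hKJ
    · intro h
      rw [← h] at hyJ
      exact hyK hyJ
  exact hcov.2 h1 h2

lemma CP.even_cluster {K F : Set G.El} (a : G.V)
    (hcoA : F ⊆ G.componentIn K a) (hFA : Even ((F ∩ A).ncard)) (v : G.V) :
    Even ((G.componentIn K v ∩ F ∩ A).ncard) := by
  by_cases h : ∃ x ∈ F, x ∈ G.componentIn K v
  · obtain ⟨x, hxF, hxC⟩ := h
    have heq : G.componentIn K v ∩ F = F := by
      apply Set.Subset.antisymm Set.inter_subset_right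
      intro y hy
      exact Set.mem_inter (CP.componentIn_trans (hcoA hxF) hxC (hcoA hy)) hy
    rw [heq]; exact hFA
  · have heq : G.componentIn K v ∩ F = ∅ := by
      ext x
      simp only [Set.mem_inter_iff, Set.mem_empty_iff_false, iff_false, not_and]
      intro h1 h2; exact h ⟨x, h2, h1⟩
    rw [heq]; simp

lemma CP.build_contra {I J : EvenPoset G A} (hcov : I ⋖ J) (hIm : G.AEvenMember A I.1)
    (F : Set G.El) (hFJ : F ⊆ J.1) (hFnI : ∀ x ∈ F, x ∉ I.1) (hFne : F.Nonempty)
    {y : G.El} (hyJ : y ∈ J.1) (hyK : y ∉ I.1 ∪ F)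
    (hsi : G.SemiInduced (I.1 ∪ F)) (a : G.V)
    (hcoA : F ⊆ G.componentIn (I.1 ∪ F) a) (hFA : Even ((F ∩ A).ncard)) : False := by
  have hIJ : I.1 ⊆ J.1 := hcov.1.le
  have hKdiff : (I.1 ∪ F) \ I.1 = F := by
    ext x
    simp only [Set.mem_diff, Set.mem_union]
    constructor
    · rintro ⟨h | h, hnI⟩
      · exact absurd h hnI
      · exact h
    · intro h; exact ⟨Or.inr h, hFnI x h⟩
  have hmem : G.AEvenMember A (I.1 ∪ F) := by
    refine ⟨hsi, fun v hv => ?_⟩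
    rw [CP.master A Set.subset_union_left hIm.1 hIm.2 hv, hKdiff]
    exact CP.even_cluster a hcoA hFA v
  obtain ⟨x, hxF⟩ := hFne
  exact CP.no_mid hcov (I.1 ∪ F) Set.subset_union_left (Set.union_subset hIJ hFJ)
    (Set.mem_union_right _ hxF) (hFnI x hxF) hyJ hyK hmem

lemma CP.FD {Jset Iset : Set G.El} (d : G.V) (Dv : Set G.V)
    (hvert : ∀ x : G.V, Sum.inl x ∈ Jset → Sum.inl x ∈ Iset ∨ x = d ∨ x ∈ Dv)
    (HL2a : ∀ x y : G.V, G.adjIn Jset x y → Sum.inl x ∈ Iset ∪ {Sum.inl d} →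
      Sum.inl y ∈ Iset ∪ {Sum.inl d} → G.adjIn (Iset ∪ {Sum.inl d}) x y)
    {u : G.V} (hreach : Relation.ReflTransGen (G.adjIn Jset) d u) :
    (∃ b ∈ Dv, ∃ x : G.V, Sum.inl x ∈ Iset ∪ {Sum.inl d} ∧
      Relation.ReflTransGen (G.adjIn (Iset ∪ {Sum.inl d})) d x ∧ G.adjIn Jset x b) ∨
      ((Sum.inl u ∈ Iset ∨ u = d) ∧
        Relation.ReflTransGen (G.adjIn (Iset ∪ {Sum.inl d})) d u) := by
  induction hreach with
  | refl => exact Or.inr ⟨Or.inr rfl, Relation.ReflTransGen.refl⟩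
  | @tail u' c _ hstep ih =>
    rcases ih with h | ⟨hu', hr⟩
    · exact Or.inl h
    · have hu'mem : Sum.inl u' ∈ Iset ∪ {Sum.inl d} := by
        rcases hu' with h | h
        · exact Or.inl h
        · exact Or.inr (by simp [h])
      have hcJ : Sum.inl c ∈ Jset := hstep.2.1
      rcases hvert c hcJ with hc | hc | hc
      · exact Or.inr ⟨Or.inl hc, hr.tail (HL2a u' c hstep hu'mem (Or.inl hc))⟩
      · subst hc
        exact Or.inr ⟨Or.inr rfl, hr.tail (HL2a u' c hstep hu'mem (Or.inr rfl))⟩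
      · exact Or.inl ⟨c, hc, u', hu'mem, hr, hstep⟩

namespace CP.Ctx

variable {I J : EvenPoset G A}

lemma symm (ctx : CP.Ctx A I J va vb) : CP.Ctx A I J vb va :=
  ⟨ctx.hcov, ctx.hIm, ctx.hJm, fun e => (ctx.hBE e).trans or_comm, ctx.hM, ctx.hab.symm, ctx.h3⟩

lemma hIJ (ctx : CP.Ctx A I J va vb) : I.1 ⊆ J.1 := ctx.hcov.1.le

lemma hIe (ctx : CP.Ctx A I J va vb) : ∀ e, Sum.inr e ∈ I.1 → G.Multiple e := fun e he => (ctx.hIm.1.1 e he).1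

lemma hP0 (ctx : CP.Ctx A I J va vb) : ∀ e, Sum.inr e ∈ J.1 → G.Multiple e := fun e he => (ctx.hJm.1.1 e he).1

lemma compD_even (ctx : CP.Ctx A I J va vb) : ∀ v, Sum.inl v ∈ J.1 →
    Even ((G.componentIn J.1 v ∩ (J.1 \ I.1) ∩ A).ncard) :=
  fun v hv => (CP.master A ctx.hIJ ctx.hIm.1 ctx.hIm.2 hv).mp (ctx.hJm.2 v hv)

lemma partner (ctx : CP.Ctx A I J va vb) {w : G.V} (hwD : Sum.inl w ∈ J.1 \ I.1) (hwA : Sum.inl w ∈ A) :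
    ∃ x ∈ G.componentIn J.1 w ∩ (J.1 \ I.1) ∩ A, x ≠ Sum.inl w := by
  have hmem : Sum.inl w ∈ G.componentIn J.1 w ∩ (J.1 \ I.1) ∩ A :=
    ⟨⟨CP.mem_componentIn_inl.mpr Relation.ReflTransGen.refl, hwD⟩, hwA⟩
  have hev := ctx.compD_even w hwD.1
  have hpos : 0 < (G.componentIn J.1 w ∩ (J.1 \ I.1) ∩ A).ncard :=
    (Set.ncard_pos (Set.toFinite _)).mpr ⟨_, hmem⟩
  obtain ⟨t, ht⟩ := hev
  exact CP.exists_mem_ne (by omega) (Sum.inl w)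

lemma forceW (ctx : CP.Ctx A I J va vb) {w : G.V} (hwD : Sum.inl w ∈ J.1 \ I.1) (hwa : w ≠ va) (hwb : w ≠ vb) :
    Sum.inl w ∈ A := by
  by_contra hwA
  obtain ⟨y, hyD, hyne⟩ : ∃ y ∈ J.1 \ I.1, y ≠ Sum.inl w :=
    CP.exists_mem_ne (by have := ctx.h3; omega) _
  refine CP.build_contra ctx.hcov ctx.hIm {Sum.inl w} ?_ ?_ ⟨_, rfl⟩ hyD.1 ?_ ?_ w ?_ ?_
  · intro x hx; rw [Set.mem_singleton_iff] at hx; subst hx; exact hwD.1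
  · intro x hx; rw [Set.mem_singleton_iff] at hx; subst hx; exact hwD.2
  · rintro (h | h)
    · exact hyD.2 h
    · exact hyne h
  · refine CP.mkSemiInduced ctx.hBE ?_ ?_ ?_
    · rintro e (he | he)
      · exact ctx.hIe e he
      · exact absurd he (by simp)
    · rintro e (he | he)
      · have h := CP.semiInduced_endpoints ctx.hBE ctx.hIm.1 he
        exact ⟨Or.inl h.1, Or.inl h.2⟩
      · exact absurd he (by simp)
    · rintro (ha | ha) (hb | hb)
      · obtain ⟨f, hf1, hf2⟩ := CP.P2 ctx.hBE ctx.hIm.1 ctx.hM ha hb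
        exact ⟨f, hf1, Or.inl hf2⟩
      · rw [Set.mem_singleton_iff] at hb
        exact absurd (Sum.inl.inj hb).symm hwb
      · rw [Set.mem_singleton_iff] at ha
        exact absurd (Sum.inl.inj ha).symm hwa
      · rw [Set.mem_singleton_iff] at ha
        exact absurd (Sum.inl.inj ha).symm hwa
  · intro x hx; rw [Set.mem_singleton_iff] at hx; subst hx
    exact CP.mem_componentIn_inl.mpr Relation.ReflTransGen.refl
  · rw [Set.singleton_inter_eq_empty.mpr hwA]; simp

lemma force_end (ctx : CP.Ctx A I J va vb) (hvaD : Sum.inl va ∈ J.1 \ I.1) (hvbI : Sum.inl vb ∉ I.1)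
    {y : G.El} (hyD : y ∈ J.1 \ I.1) (hyne : y ≠ Sum.inl va) : Sum.inl va ∈ A := by
  by_contra hA'
  refine CP.build_contra ctx.hcov ctx.hIm {Sum.inl va} ?_ ?_ ⟨_, rfl⟩ hyD.1 ?_ ?_ va ?_ ?_
  · intro x hx; rw [Set.mem_singleton_iff] at hx; subst hx; exact hvaD.1
  · intro x hx; rw [Set.mem_singleton_iff] at hx; subst hx; exact hvaD.2
  · rintro (h | h)
    · exact hyD.2 h
    · exact hyne h
  · refine CP.mkSemiInduced ctx.hBE ?_ ?_ ?_
    · rintro e (he | he)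
      · exact ctx.hIe e he
      · exact absurd he (by simp)
    · rintro e (he | he)
      · exact absurd (CP.semiInduced_endpoints ctx.hBE ctx.hIm.1 he).2 hvbI
      · exact absurd he (by simp)
    · rintro _ (hb | hb)
      · exact absurd hb hvbI
      · rw [Set.mem_singleton_iff] at hb
        exact absurd (Sum.inl.inj hb) ctx.hab.symm
  · intro x hx; rw [Set.mem_singleton_iff] at hx; subst hx
    exact CP.mem_componentIn_inl.mpr Relation.ReflTransGen.refl
  · rw [Set.singleton_inter_eq_empty.mpr hA']; simp

end CP.Ctx

end CoverCtx2

section CoverAux3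

variable {G : Multigraph} {A : Set G.El} {va vb : G.V}

lemma CP.ends_eq (hBE : ∀ e, G.Multiple e ↔
      ((G.fst e = va ∧ G.snd e = vb) ∨ (G.fst e = vb ∧ G.snd e = va)))
    {e : G.E} {u w0 : G.V} (hme : G.Multiple e)
    (hor : (G.fst e = u ∧ G.snd e = w0) ∨ (G.fst e = w0 ∧ G.snd e = u)) :
    (u = va ∧ w0 = vb) ∨ (u = vb ∧ w0 = va) := by
  rcases (hBE e).1 hme with h1 | h1 <;> rcases hor with h0 | h0
  · exact Or.inl ⟨h0.1.symm.trans h1.1, h0.2.symm.trans h1.2⟩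
  · exact Or.inr ⟨h0.2.symm.trans h1.2, h0.1.symm.trans h1.1⟩
  · exact Or.inr ⟨h0.1.symm.trans h1.1, h0.2.symm.trans h1.2⟩
  · exact Or.inl ⟨h0.2.symm.trans h1.2, h0.1.symm.trans h1.1⟩

/-- Every element of the poset is an `A`-even semi-induced subgraph (as a set). -/
lemma CP.memAE (hA : G.Admissible A)
    (hBE : ∀ e, G.Multiple e ↔ ((G.fst e = va ∧ G.snd e = vb) ∨ (G.fst e = vb ∧ G.snd e = va)))
    (S : EvenPoset G A) : G.AEvenMember A S.1 := by
  rcases S.2 with h | h | h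
  · rw [h]
    refine ⟨⟨?_, ?_⟩, ?_⟩
    · intro e he; exact absurd he (Set.notMem_empty _)
    · intro e _ hf _; exact absurd hf (Set.notMem_empty _)
    · intro v hv; exact absurd hv (Set.notMem_empty _)
  · rw [h]
    have hedge : ∀ e, Sum.inr e ∈ G.topSet ↔ G.Multiple e := by
      intro e
      constructor
      · intro he; exact he e rfl
      · intro hm e' he'
        have he'' : e' = e := (Sum.inr.inj he').symm
        subst he''; exact hm
    have hvtx : ∀ w : G.V, Sum.inl w ∈ G.topSet := by
      intro w e' he'; exact absurd he' (by simp)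
    have hadj : ∀ u w, G.adjIn G.topSet u w ↔ G.adj u w := by
      intro u w
      constructor
      · rintro ⟨_, _, e, hor, _⟩; exact ⟨e, hor⟩
      · rintro ⟨e, hor⟩
        exact ⟨hvtx u, hvtx w, e, hor, fun hm => (hedge e).mpr hm⟩
    have hreach : ∀ u w, Relation.ReflTransGen (G.adjIn G.topSet) u w ↔ G.reachable u w := by
      intro u w
      constructor
      · exact Relation.ReflTransGen.mono (fun x y hxy => (hadj x y).1 hxy) _ _
      · exact Relation.ReflTransGen.mono (fun x y hxy => (hadj x y).2 hxy) _ _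
    refine ⟨⟨?_, ?_⟩, ?_⟩
    · intro e he
      exact ⟨(hedge e).1 he, hvtx _, hvtx _⟩
    · intro e hme _ _
      exact ⟨e, Or.inl ⟨rfl, rfl⟩, (hedge e).mpr hme⟩
    · intro v _
      have hsplit : G.componentIn G.topSet v ∩ A =
          (Sum.inl '' {u | G.reachable v u ∧ Sum.inl u ∈ A}) ∪
          ({x | ∃ e, x = Sum.inr e ∧ G.Multiple e ∧
              Relation.ReflTransGen (G.adjIn G.topSet) v (G.fst e)} ∩ A) := by
        ext x
        constructor
        · rintro ⟨(⟨u, rfl, hu⟩ | ⟨e, rfl, h1, h2⟩), hA'⟩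
          · exact Or.inl ⟨u, ⟨(hreach v u).1 hu, hA'⟩, rfl⟩
          · exact Or.inr ⟨⟨e, rfl, (hedge e).1 h1, h2⟩, hA'⟩
        · rintro (⟨u, ⟨h1, h2⟩, rfl⟩ | ⟨⟨e, rfl, h1, h2⟩, hA'⟩)
          · exact ⟨Or.inl ⟨u, rfl, (hreach v u).2 h1⟩, h2⟩
          · exact ⟨Or.inr ⟨e, rfl, (hedge e).mpr h1, h2⟩, hA'⟩
      have hdisj : Disjoint (Sum.inl '' {u | G.reachable v u ∧ Sum.inl u ∈ A})
          ({x : G.El | ∃ e, x = Sum.inr e ∧ G.Multiple e ∧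
              Relation.ReflTransGen (G.adjIn G.topSet) v (G.fst e)} ∩ A) := by
        apply Set.disjoint_left.mpr
        rintro x ⟨u, _, rfl⟩ ⟨⟨e, he, _⟩, _⟩
        exact absurd he (by simp)
      rw [hsplit, Set.ncard_union_eq hdisj (Set.toFinite _) (Set.toFinite _)]
      refine Even.add ?_ ?_
      · rw [Set.ncard_image_of_injective _ Sum.inl_injective]
        exact hA.2.1 v
      · by_cases hex : ∃ e, G.Multiple e ∧ Relation.ReflTransGen (G.adjIn G.topSet) v (G.fst e)
        · obtain ⟨eb, hebm, hebr⟩ := hex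
          have heq : {x : G.El | ∃ e, x = Sum.inr e ∧ G.Multiple e ∧
              Relation.ReflTransGen (G.adjIn G.topSet) v (G.fst e)} ∩ A =
              Sum.inr '' {e' | G.sameEnds eb e' ∧ Sum.inr e' ∈ A} := by
            ext x
            constructor
            · rintro ⟨⟨e, rfl, h1, _⟩, hA'⟩
              exact ⟨e, ⟨CP.sameEnds_of_mult hBE hebm h1, hA'⟩, rfl⟩
            · rintro ⟨e, ⟨hs, hA'⟩, rfl⟩
              have hm := CP.mult_of_sameEnds hebm hs
              refine ⟨⟨e, rfl, hm, ?_⟩, hA'⟩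
              have hadjab : G.adjIn G.topSet va vb :=
                CP.adjIn_ab hBE (hvtx va) (hvtx vb) hebm ((hedge eb).mpr hebm)
              rcases CP.fst_mem hBE hm with h' | h' <;>
                rcases CP.fst_mem hBE hebm with h'' | h'' <;>
                rw [h'] <;> rw [h''] at hebr
              · exact hebr
              · exact hebr.tail (CP.adjIn_symm hadjab)
              · exact hebr.tail hadjab
              · exact hebr
          rw [heq, Set.ncard_image_of_injective _ Sum.inr_injective]
          exact (hA.2.2.2 eb hebm).2
        · have heq : {x : G.El | ∃ e, x = Sum.inr e ∧ G.Multiple e ∧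
              Relation.ReflTransGen (G.adjIn G.topSet) v (G.fst e)} ∩ A = ∅ := by
            ext x
            simp only [Set.mem_inter_iff, Set.mem_setOf_eq, Set.mem_empty_iff_false, iff_false,
              not_and]
            rintro ⟨e, rfl, h1, h2⟩ _
            exact hex ⟨e, h1, h2⟩
          rw [heq]; simp
  · exact h

lemma CP.iso_sameEnds_back {G H : Multigraph} (φ : G.Iso H) {x y : G.E}
    (h : H.sameEnds (φ.eEquiv x) (φ.eEquiv y)) : G.sameEnds x y := by
  have hx := φ.ends x
  have hy := φ.ends y
  rcases hx with ⟨hx1, hx2⟩ | ⟨hx1, hx2⟩ <;> rcases hy with ⟨hy1, hy2⟩ | ⟨hy1, hy2⟩ <;>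
    rcases h with ⟨h1, h2⟩ | ⟨h1, h2⟩ <;>
    simp only [hx1, hx2, hy1, hy2] at h1 h2 <;>
    first
      | exact Or.inl ⟨φ.vEquiv.injective h1, φ.vEquiv.injective h2⟩
      | exact Or.inr ⟨φ.vEquiv.injective h1, φ.vEquiv.injective h2⟩
      | exact Or.inl ⟨φ.vEquiv.injective h2, φ.vEquiv.injective h1⟩
      | exact Or.inr ⟨φ.vEquiv.injective h2, φ.vEquiv.injective h1⟩

lemma CP.iso_multiple_back {G H : Multigraph} (φ : G.Iso H) {e : H.E} (h : H.Multiple e) :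
    G.Multiple (φ.eEquiv.symm e) := by
  obtain ⟨e', hne, hs⟩ := h
  refine ⟨φ.eEquiv.symm e', fun heq => hne (φ.eEquiv.symm.injective heq), ?_⟩
  apply CP.iso_sameEnds_back φ
  rw [Equiv.apply_symm_apply, Equiv.apply_symm_apply]
  exact hs

lemma CP.mkGraph_multiple (n m k : ℕ) (hn : 2 ≤ n) (f g : ℕ → ℕ)
    (hf : ∀ i, i < k → f i < n) (hg : ∀ i, i < k → g i < n)
    (hfg : ∀ i, i < k → f i ≠ g i) (hm : 2 ≤ m) :
    (mkGraph n m k hn f g hf hg hfg).Multiple (Sum.inl ⟨0, by omega⟩) := by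
  refine ⟨Sum.inl ⟨1, by omega⟩, ?_, Or.inl ⟨rfl, rfl⟩⟩
  intro hcontra
  have := Sum.inl.inj hcontra
  rw [Fin.mk.injEq] at this
  omega

lemma CP.exists_multiple_of_InListL {G : Multigraph} (hL : InListL G) :
    ∃ e, G.Multiple e := by
  have key : ∀ (H : Multigraph) (e : H.E), H.Multiple e → Nonempty (G.Iso H) →
      ∃ e', G.Multiple e' := by
    rintro H e he ⟨φ⟩
    exact ⟨φ.eEquiv.symm e, CP.iso_multiple_back φ he⟩
  rcases hL with ⟨m, hm, hc⟩ | ⟨m, hm, hc⟩ <;>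
    rcases hc with ⟨n, h⟩ | ⟨j, h⟩ | ⟨j, h⟩ <;>
    first
      | exact key _ _ (CP.mkGraph_multiple _ _ _ _ _ _ _ _ _ hm) h

lemma CP.pair_contra {I J : EvenPoset G A} (ctx : CP.Ctx A I J va vb) {w b : G.V}
    (hwD : Sum.inl w ∈ J.1 \ I.1) (hbD : Sum.inl b ∈ J.1 \ I.1) (hwb : w ≠ b)
    (hwA : Sum.inl w ∈ A) (hbA : Sum.inl b ∈ A)
    {y : G.El} (hyD : y ∈ J.1 \ I.1) (hyw : y ≠ Sum.inl w) (hyb : y ≠ Sum.inl b)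
    (hsi12 : ∀ e, Sum.inr e ∈ I.1 → Sum.inl va ∈ I.1 ∧ Sum.inl vb ∈ I.1)
    (hsi3 : Sum.inl va ∈ I.1 ∪ {Sum.inl w, Sum.inl b} →
      Sum.inl vb ∈ I.1 ∪ {Sum.inl w, Sum.inl b} →
      ∃ e, G.Multiple e ∧ Sum.inr e ∈ I.1 ∪ {Sum.inl w, Sum.inl b})
    (hrb : Relation.ReflTransGen (G.adjIn (I.1 ∪ {Sum.inl w, Sum.inl b})) w b) : False := by
  refine CP.build_contra ctx.hcov ctx.hIm {Sum.inl w, Sum.inl b} ?_ ?_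
    ⟨_, Set.mem_insert _ _⟩ hyD.1 ?_ ?_ w ?_ ?_
  · rintro x (rfl | hx)
    · exact hwD.1
    · rw [Set.mem_singleton_iff] at hx; subst hx; exact hbD.1
  · rintro x (rfl | hx)
    · exact hwD.2
    · rw [Set.mem_singleton_iff] at hx; subst hx; exact hbD.2
  · rintro (hy | hy)
    · exact hyD.2 hy
    · rcases hy with hy | hy
      · exact hyw hy
      · rw [Set.mem_singleton_iff] at hy; exact hyb hy
  · refine CP.mkSemiInduced ctx.hBE ?_ ?_ ?_
    · rintro e (he | he)
      · exact ctx.hIe e he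
      · rcases he with he | he
        · exact absurd he (by simp)
        · rw [Set.mem_singleton_iff] at he; exact absurd he (by simp)
    · rintro e (he | he)
      · have h12 := hsi12 e he
        exact ⟨Or.inl h12.1, Or.inl h12.2⟩
      · rcases he with he | he
        · exact absurd he (by simp)
        · rw [Set.mem_singleton_iff] at he; exact absurd he (by simp)
    · exact hsi3
  · rintro x (rfl | hx)
    · exact CP.mem_componentIn_inl.mpr Relation.ReflTransGen.refl
    · rw [Set.mem_singleton_iff] at hx; subst hx
      exact CP.mem_componentIn_inl.mpr hrb
  · have heq : ({Sum.inl w, Sum.inl b} : Set G.El) ∩ A = {Sum.inl w, Sum.inl b} := by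
      apply Set.inter_eq_self_of_subset_left
      rintro x (rfl | hx)
      · exact hwA
      · rw [Set.mem_singleton_iff] at hx; subst hx; exact hbA
    rw [heq, Set.ncard_pair (by simp [hwb])]
    exact even_two

end CoverAux3

section CoverAux4

variable {G : Multigraph} {A : Set G.El} {va vb : G.V} {I J : EvenPoset G A}

/-- Step (e): at most two bundle edges in the difference of a cover. -/
lemma CP.edges_le_two (ctx : CP.Ctx A I J va vb) :
    ((J.1 \ I.1) ∩ {x : G.El | ∃ e, x = Sum.inr e ∧ G.Multiple e}).ncard ≤ 2 := by
  by_contra hgt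
  push_neg at hgt
  have key : ∀ ea eb ec : G.E, Sum.inr ea ∈ J.1 \ I.1 → Sum.inr eb ∈ J.1 \ I.1 →
      Sum.inr ec ∈ J.1 \ I.1 → ea ≠ eb → ec ≠ ea → ec ≠ eb →
      (Sum.inr ea ∈ A ↔ Sum.inr eb ∈ A) → False := by
    intro ea eb ec haD hbD hcD habne hca hcb hstat
    have hIJ := ctx.hIJ
    have haJ : Sum.inr ea ∈ J.1 := haD.1
    have hbJ := hbD.1
    have hcJ := hcD.1
    have ham := ctx.hP0 ea haJ
    have hbm := ctx.hP0 eb hbJ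
    have hcm := ctx.hP0 ec hcJ
    obtain ⟨hvaJ, hvbJ⟩ := CP.semiInduced_endpoints ctx.hBE ctx.hJm.1 haJ
    set K : Set G.El := J.1 \ {Sum.inr ea, Sum.inr eb} with hK
    have hKJ : K ⊆ J.1 := Set.diff_subset
    have hcnotin : (Sum.inr ec : G.El) ∉ ({Sum.inr ea, Sum.inr eb} : Set G.El) := by
      rintro (h | h)
      · exact hca (Sum.inr.inj h)
      · rw [Set.mem_singleton_iff] at h; exact hcb (Sum.inr.inj h)
    have hcK : Sum.inr ec ∈ K := ⟨hcJ, hcnotin⟩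
    have hIK : I.1 ⊆ K := by
      intro x hx
      refine ⟨hIJ hx, ?_⟩
      rintro (h | h)
      · exact haD.2 (h ▸ hx)
      · rw [Set.mem_singleton_iff] at h; exact hbD.2 (h ▸ hx)
    have hvaK : Sum.inl va ∈ K := ⟨hvaJ, by simp⟩
    have hvbK : Sum.inl vb ∈ K := ⟨hvbJ, by simp⟩
    have hsiK : G.SemiInduced K := CP.mkSemiInduced ctx.hBE
      (fun e he => ctx.hP0 e he.1)
      (fun e _ => ⟨hvaK, hvbK⟩)
      (fun _ _ => ⟨ec, hcm, hcK⟩)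
    have hadj : ∀ u w, G.adjIn J.1 u w ↔ G.adjIn K u w := by
      intro u w
      constructor
      · rintro ⟨hu, hw, e, hor, hmem⟩
        refine ⟨⟨hu, by simp⟩, ⟨hw, by simp⟩, ?_⟩
        by_cases hme : G.Multiple e
        · exact ⟨ec, CP.orient ctx.hBE hme hcm hor, fun _ => hcK⟩
        · exact ⟨e, hor, fun hm => absurd hm hme⟩
      · rintro ⟨hu, hw, e, hor, hmem⟩
        exact ⟨hu.1, hw.1, e, hor, fun hm => (hmem hm).1⟩
    have hreach : ∀ u w, Relation.ReflTransGen (G.adjIn J.1) u w ↔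
        Relation.ReflTransGen (G.adjIn K) u w :=
      fun u w => ⟨Relation.ReflTransGen.mono (fun x y h => (hadj x y).1 h) _ _,
        Relation.ReflTransGen.mono (fun x y h => (hadj x y).2 h) _ _⟩
    have hcomp : ∀ v, G.componentIn K v = G.componentIn J.1 v \ {Sum.inr ea, Sum.inr eb} := by
      intro v
      ext x
      rcases x with u | e
      · constructor
        · intro hx
          exact ⟨CP.mem_componentIn_inl.mpr ((hreach _ _).mpr (CP.mem_componentIn_inl.mp hx)),
            by simp⟩
        · rintro ⟨hx, _⟩
          exact CP.mem_componentIn_inl.mpr ((hreach _ _).mp (CP.mem_componentIn_inl.mp hx))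
      · constructor
        · intro hx
          obtain ⟨h1, h2⟩ := CP.mem_componentIn_inr.mp hx
          exact ⟨CP.mem_componentIn_inr.mpr ⟨h1.1, (hreach _ _).mpr h2⟩, h1.2⟩
        · rintro ⟨hx, hp⟩
          obtain ⟨h1, h2⟩ := CP.mem_componentIn_inr.mp hx
          exact CP.mem_componentIn_inr.mpr ⟨⟨h1, hp⟩, (hreach _ _).mp h2⟩
    have hevK : ∀ v, Sum.inl v ∈ K → Even ((G.componentIn K v ∩ A).ncard) := by
      intro v hv
      have hJv := ctx.hJm.2 v hv.1
      rw [hcomp v]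
      have hinter : (G.componentIn J.1 v \ {Sum.inr ea, Sum.inr eb}) ∩ A =
          (G.componentIn J.1 v ∩ A) \ {Sum.inr ea, Sum.inr eb} := by
        ext x
        constructor
        · rintro ⟨⟨h1, h2⟩, h3⟩; exact ⟨⟨h1, h3⟩, h2⟩
        · rintro ⟨⟨h1, h3⟩, h2⟩; exact ⟨⟨h1, h2⟩, h3⟩
      rw [hinter]
      have hadjab : G.adjIn J.1 va vb := CP.adjIn_ab ctx.hBE hvaJ hvbJ hcm hcJ
      have hfstiff : ∀ e e' : G.E, G.Multiple e → G.Multiple e' →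
          Relation.ReflTransGen (G.adjIn J.1) v (G.fst e) →
          Relation.ReflTransGen (G.adjIn J.1) v (G.fst e') := by
        intro e e' hm hm' hr
        rcases CP.fst_mem ctx.hBE hm' with h' | h' <;>
          rcases CP.fst_mem ctx.hBE hm with h'' | h'' <;> rw [h'] <;> rw [h''] at hr
        · exact hr
        · exact hr.tail (CP.adjIn_symm hadjab)
        · exact hr.tail hadjab
        · exact hr
      have hiff : Sum.inr ea ∈ G.componentIn J.1 v ∩ A ↔
          Sum.inr eb ∈ G.componentIn J.1 v ∩ A := by
        constructor
        · rintro ⟨hc, hA'⟩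
          obtain ⟨_, hr⟩ := CP.mem_componentIn_inr.mp hc
          exact ⟨CP.mem_componentIn_inr.mpr ⟨hbJ, hfstiff ea eb ham hbm hr⟩, hstat.1 hA'⟩
        · rintro ⟨hc, hA'⟩
          obtain ⟨_, hr⟩ := CP.mem_componentIn_inr.mp hc
          exact ⟨CP.mem_componentIn_inr.mpr ⟨haJ, hfstiff eb ea hbm ham hr⟩, hstat.2 hA'⟩
      by_cases hin : Sum.inr ea ∈ G.componentIn J.1 v ∩ A
      · have hinb := hiff.1 hin
        have hsub : ({Sum.inr ea, Sum.inr eb} : Set G.El) ⊆ G.componentIn J.1 v ∩ A := by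
          rintro x (rfl | hx)
          · exact hin
          · rw [Set.mem_singleton_iff] at hx; subst hx; exact hinb
        have hpair2 : ({Sum.inr ea, Sum.inr eb} : Set G.El).ncard = 2 :=
          Set.ncard_pair (by simp [habne])
        have h2le : 2 ≤ (G.componentIn J.1 v ∩ A).ncard := by
          have := Set.ncard_le_ncard hsub (Set.toFinite _)
          omega
        rw [Set.ncard_diff hsub, hpair2, Nat.even_sub h2le]
        exact iff_of_true hJv even_two
      · have heqd : (G.componentIn J.1 v ∩ A) \ {Sum.inr ea, Sum.inr eb} =
            G.componentIn J.1 v ∩ A := by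
          ext x
          constructor
          · rintro ⟨hx, _⟩; exact hx
          · intro hx
            refine ⟨hx, ?_⟩
            rintro (h | h)
            · exact hin (h ▸ hx)
            · rw [Set.mem_singleton_iff] at h
              exact hin (hiff.2 (h ▸ hx))
        rw [heqd]; exact hJv
    obtain ⟨y3, hy3D, hy3a, hy3b⟩ := CP.exists_mem_ne2 ctx.h3 (Sum.inr ea) (Sum.inr eb)
    have hy3K : y3 ∈ K := by
      refine ⟨hy3D.1, ?_⟩
      rintro (h | h)
      · exact hy3a h
      · rw [Set.mem_singleton_iff] at h; exact hy3b h
    exact CP.no_mid ctx.hcov K hIK hKJ hy3K hy3D.2 haJ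
      (fun hK' => hK'.2 (Set.mem_insert _ _)) ⟨hsiK, hevK⟩
  -- extract three distinct elements
  obtain ⟨x1, hx1, x2, hx2, hne12⟩ :=
    (Set.one_lt_ncard (s := (J.1 \ I.1) ∩ {x : G.El | ∃ e, x = Sum.inr e ∧ G.Multiple e})
      (Set.toFinite _)).mp (by omega)
  obtain ⟨x3, hx3, hne31, hne32⟩ := CP.exists_mem_ne2
    (s := (J.1 \ I.1) ∩ {x : G.El | ∃ e, x = Sum.inr e ∧ G.Multiple e}) (by omega) x1 x2
  obtain ⟨e1, rfl, he1m⟩ := hx1.2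
  obtain ⟨e2, rfl, he2m⟩ := hx2.2
  obtain ⟨e3, rfl, he3m⟩ := hx3.2
  have h12 : e1 ≠ e2 := fun h => hne12 (by rw [h])
  have h31 : e3 ≠ e1 := fun h => hne31 (by rw [h])
  have h32 : e3 ≠ e2 := fun h => hne32 (by rw [h])
  by_cases hA12 : (Sum.inr e1 ∈ A ↔ Sum.inr e2 ∈ A)
  · exact key e1 e2 e3 hx1.1 hx2.1 hx3.1 h12 h31 h32 hA12
  · by_cases hA13 : (Sum.inr e1 ∈ A ↔ Sum.inr e3 ∈ A)
    · exact key e1 e3 e2 hx1.1 hx3.1 hx2.1 h31.symm h12.symm h32.symm hA13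
    · have hA23 : (Sum.inr e2 ∈ A ↔ Sum.inr e3 ∈ A) := by tauto
      exact key e2 e3 e1 hx2.1 hx3.1 hx1.1 h32.symm h12 h31.symm hA23

end CoverAux4

section CoverAux5

variable {G : Multigraph} {A : Set G.El} {va vb : G.V} {I J : EvenPoset G A}

lemma CP.mk_hvert (Jset Iset : Set G.El) (w : G.V) :
    ∀ x : G.V, Sum.inl x ∈ Jset → Sum.inl x ∈ Iset ∨ x = w ∨
      x ∈ {z : G.V | Sum.inl z ∈ Jset \ Iset ∧ z ≠ w} := by
  intro x hx
  by_cases hI : Sum.inl x ∈ Iset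
  · exact Or.inl hI
  by_cases hxw : x = w
  · exact Or.inr (Or.inl hxw)
  · exact Or.inr (Or.inr ⟨⟨hx, hI⟩, hxw⟩)

lemma CP.pair_sub {w b : G.V} :
    (I.1 ∪ {Sum.inl w} : Set G.El) ⊆ I.1 ∪ {Sum.inl w, Sum.inl b} := by
  rintro t (ht | ht)
  · exact Or.inl ht
  · rw [Set.mem_singleton_iff] at ht; subst ht; exact Or.inr (Set.mem_insert _ _)

/-- Case: both bundle endpoints in `I`. -/
lemma CP.case_both (ctx : CP.Ctx A I J va vb)
    (hvaI : Sum.inl va ∈ I.1) (hvbI : Sum.inl vb ∈ I.1)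
    {w w' : G.V} (hwD : Sum.inl w ∈ J.1 \ I.1) (hw'D : Sum.inl w' ∈ J.1 \ I.1)
    (hww' : w ≠ w')
    {e0 : G.E} (he0D : Sum.inr e0 ∈ J.1 \ I.1) : False := by
  have hBE := ctx.hBE
  have hwa : w ≠ va := fun h => hwD.2 (by rw [h]; exact hvaI)
  have hwb : w ≠ vb := fun h => hwD.2 (by rw [h]; exact hvbI)
  obtain ⟨f, hfm, hfI⟩ := CP.P2 hBE ctx.hIm.1 ctx.hM hvaI hvbI
  have hwA := ctx.forceW hwD hwa hwb
  have hlift : ∀ (S : Set G.El), Sum.inr f ∈ S → ∀ x y : G.V, G.adjIn J.1 x y →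
      Sum.inl x ∈ S → Sum.inl y ∈ S → G.adjIn S x y := by
    intro S hfS x y hxy hxS hyS
    obtain ⟨-, -, e, hor, hmem⟩ := hxy
    by_cases hme : G.Multiple e
    · exact ⟨hxS, hyS, f, CP.orient hBE hme hfm hor, fun _ => hfS⟩
    · exact ⟨hxS, hyS, e, hor, fun hm => absurd hm hme⟩
  set Dv : Set G.V := {z | Sum.inl z ∈ J.1 \ I.1 ∧ z ≠ w} with hDv
  have hvert := CP.mk_hvert J.1 I.1 w
  have HL2a : ∀ x y : G.V, G.adjIn J.1 x y → Sum.inl x ∈ I.1 ∪ {Sum.inl w} →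
      Sum.inl y ∈ I.1 ∪ {Sum.inl w} → G.adjIn (I.1 ∪ {Sum.inl w}) x y :=
    fun x y hxy hx hy => hlift _ (Or.inl hfI) x y hxy hx hy
  have handleLeft : ∀ b ∈ Dv, ∀ x : G.V, Sum.inl x ∈ I.1 ∪ {Sum.inl w} →
      Relation.ReflTransGen (G.adjIn (I.1 ∪ {Sum.inl w})) w x → G.adjIn J.1 x b → False := by
    intro b hb x hxm hrx hstep
    have hbD : Sum.inl b ∈ J.1 \ I.1 := hb.1
    have hba : b ≠ va := fun h => hbD.2 (by rw [h]; exact hvaI)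
    have hbb : b ≠ vb := fun h => hbD.2 (by rw [h]; exact hvbI)
    have hbA := ctx.forceW hbD hba hbb
    have hrb : Relation.ReflTransGen (G.adjIn (I.1 ∪ {Sum.inl w, Sum.inl b})) w b :=
      (CP.reach_mono CP.pair_sub hrx).tail
        (hlift _ (Or.inl hfI) x b hstep (CP.pair_sub hxm) (Or.inr (Or.inr rfl)))
    exact CP.pair_contra ctx hwD hbD hb.2.symm hwA hbA (y := Sum.inr e0) he0D
      (by simp) (by simp) (fun e _ => ⟨hvaI, hvbI⟩) (fun _ _ => ⟨f, hfm, Or.inl hfI⟩) hrb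
  obtain ⟨x, hxmem, hxne⟩ := ctx.partner hwD hwA
  obtain ⟨⟨hxC, hxD⟩, hxA⟩ := hxmem
  rcases x with u | e1
  · have hu : u ∈ Dv := ⟨hxD, fun h => hxne (by rw [h])⟩
    rcases CP.FD w Dv hvert HL2a (CP.mem_componentIn_inl.mp hxC) with
      ⟨b, hb, x, hxm, hrx, hstep⟩ | ⟨hc, -⟩
    · exact handleLeft b hb x hxm hrx hstep
    · rcases hc with h | h
      · exact hxD.2 h
      · exact hu.2 h
  · obtain ⟨he1J, hre⟩ := CP.mem_componentIn_inr.mp hxC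
    have he1m : G.Multiple e1 := ctx.hP0 e1 he1J
    rcases CP.FD w Dv hvert HL2a hre with ⟨b, hb, x, hxm, hrx, hstep⟩ | ⟨-, hr⟩
    · exact handleLeft b hb x hxm hrx hstep
    · refine CP.build_contra ctx.hcov ctx.hIm {Sum.inl w, Sum.inr e1} ?_ ?_
        ⟨_, Set.mem_insert _ _⟩ hw'D.1 ?_ ?_ w ?_ ?_
      · rintro t (rfl | ht)
        · exact hwD.1
        · rw [Set.mem_singleton_iff] at ht; subst ht; exact hxD.1
      · rintro t (rfl | ht)
        · exact hwD.2
        · rw [Set.mem_singleton_iff] at ht; subst ht; exact hxD.2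
      · rintro (ht | ht | ht)
        · exact hw'D.2 ht
        · exact hww' (Sum.inl.inj ht).symm
        · rw [Set.mem_singleton_iff] at ht; exact absurd ht (by simp)
      · refine CP.mkSemiInduced hBE ?_ ?_ ?_
        · rintro e (he | he)
          · exact ctx.hIe e he
          · rcases he with he | he
            · exact absurd he (by simp)
            · rw [Set.mem_singleton_iff] at he
              rw [Sum.inr.inj he]; exact he1m
        · intro e _
          exact ⟨Or.inl hvaI, Or.inl hvbI⟩
        · intro _ _
          exact ⟨f, hfm, Or.inl hfI⟩
      · rintro t (rfl | ht)
        · exact CP.mem_componentIn_inl.mpr Relation.ReflTransGen.refl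
        · rw [Set.mem_singleton_iff] at ht; subst ht
          refine CP.mem_componentIn_inr.mpr ⟨Or.inr (Or.inr rfl), ?_⟩
          refine CP.reach_mono ?_ hr
          rintro t' (ht' | ht')
          · exact Or.inl ht'
          · rw [Set.mem_singleton_iff] at ht'; subst ht'
            exact Or.inr (Set.mem_insert _ _)
      · have heq : ({Sum.inl w, Sum.inr e1} : Set G.El) ∩ A = {Sum.inl w, Sum.inr e1} := by
          apply Set.inter_eq_self_of_subset_left
          rintro t (rfl | ht)
          · exact hwA
          · rw [Set.mem_singleton_iff] at ht; subst ht; exact hxA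
        rw [heq, Set.ncard_pair (by simp)]
        exact even_two

/-- Case: both bundle endpoints in `D = J \ I`. -/
lemma CP.case_bb (ctx : CP.Ctx A I J va vb)
    (hvaD : Sum.inl va ∈ J.1 \ I.1) (hvbD : Sum.inl vb ∈ J.1 \ I.1)
    {w : G.V} (hwD : Sum.inl w ∈ J.1 \ I.1) (hwa : w ≠ va) (hwb : w ≠ vb) : False := by
  have hBE := ctx.hBE
  have hab := ctx.hab
  have hIedge : ∀ e, Sum.inr e ∉ I.1 := fun e he =>
    hvaD.2 (CP.semiInduced_endpoints hBE ctx.hIm.1 he).1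
  have hvaA : Sum.inl va ∈ A :=
    ctx.force_end hvaD hvbD.2 hvbD (fun h => hab (Sum.inl.inj h).symm)
  have hvbA : Sum.inl vb ∈ A :=
    ctx.symm.force_end hvbD hvaD.2 hvaD (fun h => hab (Sum.inl.inj h))
  have hwA := ctx.forceW hwD hwa hwb
  set Dv : Set G.V := {z | Sum.inl z ∈ J.1 \ I.1 ∧ z ≠ w} with hDv
  have hvert := CP.mk_hvert J.1 I.1 w
  have hnova : Sum.inl va ∉ I.1 ∪ {Sum.inl w} := by
    rintro (h | h)
    · exact hvaD.2 h
    · rw [Set.mem_singleton_iff] at h; exact hwa (Sum.inl.inj h).symm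
  have hlift : ∀ (S : Set G.El), (Sum.inl va ∉ S ∨ Sum.inl vb ∉ S) → ∀ x y : G.V,
      G.adjIn J.1 x y → Sum.inl x ∈ S → Sum.inl y ∈ S → G.adjIn S x y := by
    intro S hS x y hxy hxS hyS
    obtain ⟨-, -, e, hor, hmem⟩ := hxy
    by_cases hme : G.Multiple e
    · exfalso
      rcases CP.ends_eq hBE hme hor with ⟨h1, h2⟩ | ⟨h1, h2⟩
      · rcases hS with h | h
        · exact h (h1 ▸ hxS)
        · exact h (h2 ▸ hyS)
      · rcases hS with h | h
        · exact h (h2 ▸ hyS)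
        · exact h (h1 ▸ hxS)
    · exact ⟨hxS, hyS, e, hor, fun hm => absurd hm hme⟩
  have HL2a : ∀ x y : G.V, G.adjIn J.1 x y → Sum.inl x ∈ I.1 ∪ {Sum.inl w} →
      Sum.inl y ∈ I.1 ∪ {Sum.inl w} → G.adjIn (I.1 ∪ {Sum.inl w}) x y :=
    fun x y hxy hx hy => hlift _ (Or.inl hnova) x y hxy hx hy
  have handleLeft : ∀ b ∈ Dv, ∀ x : G.V, Sum.inl x ∈ I.1 ∪ {Sum.inl w} →
      Relation.ReflTransGen (G.adjIn (I.1 ∪ {Sum.inl w})) w x → G.adjIn J.1 x b → False := by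
    intro b hb x hxm hrx hstep
    have hbD : Sum.inl b ∈ J.1 \ I.1 := hb.1
    have hnoK : Sum.inl va ∉ I.1 ∪ {Sum.inl w, Sum.inl b} ∨
        Sum.inl vb ∉ I.1 ∪ {Sum.inl w, Sum.inl b} := by
      by_cases hbva : b = va
      · right
        rintro (h | h | h)
        · exact hvbD.2 h
        · exact hwb (Sum.inl.inj h).symm
        · rw [Set.mem_singleton_iff] at h
          exact hab ((Sum.inl.inj h).trans hbva).symm
      · left
        rintro (h | h | h)
        · exact hvaD.2 h
        · exact hwa (Sum.inl.inj h).symm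
        · rw [Set.mem_singleton_iff] at h
          exact hbva (Sum.inl.inj h).symm
    have hrb : Relation.ReflTransGen (G.adjIn (I.1 ∪ {Sum.inl w, Sum.inl b})) w b :=
      (CP.reach_mono CP.pair_sub hrx).tail
        (hlift _ hnoK x b hstep (CP.pair_sub hxm) (Or.inr (Or.inr rfl)))
    by_cases hbva : b = va
    · subst hbva
      refine CP.pair_contra ctx hwD hbD hb.2.symm hwA hvaA (y := Sum.inl vb) hvbD
        (fun h => hwb (Sum.inl.inj h).symm) (fun h => hab (Sum.inl.inj h).symm)
        (fun e he => absurd he (hIedge e)) (fun _ hvbK => ?_) hrb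
      exfalso
      rcases hvbK with h | h | h
      · exact hvbD.2 h
      · exact hwb (Sum.inl.inj h).symm
      · rw [Set.mem_singleton_iff] at h; exact hab (Sum.inl.inj h).symm
    · by_cases hbvb : b = vb
      · subst hbvb
        refine CP.pair_contra ctx hwD hbD hb.2.symm hwA hvbA (y := Sum.inl va) hvaD
          (fun h => hwa (Sum.inl.inj h).symm) (fun h => hab (Sum.inl.inj h))
          (fun e he => absurd he (hIedge e)) (fun hvaK _ => ?_) hrb
        exfalso
        rcases hvaK with h | h | h
        · exact hvaD.2 h
        · exact hwa (Sum.inl.inj h).symm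
        · rw [Set.mem_singleton_iff] at h; exact hab (Sum.inl.inj h)
      · refine CP.pair_contra ctx hwD hbD hb.2.symm hwA (ctx.forceW hbD hbva hbvb)
          (y := Sum.inl va) hvaD (fun h => hwa (Sum.inl.inj h).symm)
          (fun h => hbva (Sum.inl.inj h).symm)
          (fun e he => absurd he (hIedge e)) (fun hvaK _ => ?_) hrb
        exfalso
        rcases hvaK with h | h | h
        · exact hvaD.2 h
        · exact hwa (Sum.inl.inj h).symm
        · rw [Set.mem_singleton_iff] at h; exact hbva (Sum.inl.inj h).symm
  obtain ⟨x, hxmem, hxne⟩ := ctx.partner hwD hwA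
  obtain ⟨⟨hxC, hxD⟩, hxA⟩ := hxmem
  rcases x with u | e1
  · have hu : u ∈ Dv := ⟨hxD, fun h => hxne (by rw [h])⟩
    rcases CP.FD w Dv hvert HL2a (CP.mem_componentIn_inl.mp hxC) with
      ⟨b, hb, x, hxm, hrx, hstep⟩ | ⟨hc, -⟩
    · exact handleLeft b hb x hxm hrx hstep
    · rcases hc with h | h
      · exact hxD.2 h
      · exact hu.2 h
  · obtain ⟨he1J, hre⟩ := CP.mem_componentIn_inr.mp hxC
    have he1m := ctx.hP0 e1 he1J
    have hfst : G.fst e1 ∈ Dv := by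
      rcases CP.fst_mem hBE he1m with h | h <;> rw [h]
      · exact ⟨hvaD, fun hh => hwa hh.symm⟩
      · exact ⟨hvbD, fun hh => hwb hh.symm⟩
    rcases CP.FD w Dv hvert HL2a hre with ⟨b, hb, x, hxm, hrx, hstep⟩ | ⟨hc, -⟩
    · exact handleLeft b hb x hxm hrx hstep
    · rcases hc with h | h
      · exact hfst.1.2 h
      · exact hfst.2 h

end CoverAux5

section CoverAux6

variable {G : Multigraph} {A : Set G.El} {va vb : G.V} {I J : EvenPoset G A}

/-- Case: `va ∈ I`, `vb ∈ D`. -/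
lemma CP.case_mid (ctx : CP.Ctx A I J va vb)
    (hvaI : Sum.inl va ∈ I.1) (hvbD : Sum.inl vb ∈ J.1 \ I.1)
    {w w' : G.V} (hwD : Sum.inl w ∈ J.1 \ I.1) (hw'D : Sum.inl w' ∈ J.1 \ I.1)
    (hww' : w ≠ w') (hwa : w ≠ va) (hwb : w ≠ vb) (hw'b : w' ≠ vb)
    {e0 : G.E} (he0D : Sum.inr e0 ∈ J.1 \ I.1) : False := by
  have hBE := ctx.hBE
  have hab := ctx.hab
  have he0m : G.Multiple e0 := ctx.hP0 e0 he0D.1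
  have hIedge : ∀ e, Sum.inr e ∉ I.1 := fun e he =>
    hvbD.2 (CP.semiInduced_endpoints hBE ctx.hIm.1 he).2
  have hwA := ctx.forceW hwD hwa hwb
  set SB : Set G.El := (J.1 \ I.1) ∩ {x : G.El | ∃ e, x = Sum.inr e ∧ G.Multiple e} with hSBdef
  have he0SB : (Sum.inr e0 : G.El) ∈ SB := ⟨he0D, e0, rfl, he0m⟩
  have hSBJ : SB ⊆ J.1 := fun x hx => hx.1.1
  have hSBnI : ∀ x ∈ SB, x ∉ I.1 := fun x hx => hx.1.2
  have hSBe : ∀ x ∈ SB, ∃ e, x = Sum.inr e ∧ G.Multiple e := fun x hx => hx.2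
  have hclco : ∀ (K : Set G.El), Sum.inl va ∈ K → Sum.inl vb ∈ K → SB ⊆ K →
      ({Sum.inl vb} ∪ SB : Set G.El) ⊆ G.componentIn K vb := by
    intro K hvaK hvbK hSBK
    have hadjK : G.adjIn K va vb := CP.adjIn_ab hBE hvaK hvbK he0m (hSBK he0SB)
    rintro x (hx | hx)
    · rw [Set.mem_singleton_iff] at hx; subst hx
      exact CP.mem_componentIn_inl.mpr Relation.ReflTransGen.refl
    · obtain ⟨e, rfl, hem⟩ := hSBe x hx
      refine CP.mem_componentIn_inr.mpr ⟨hSBK hx, ?_⟩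
      rcases CP.fst_mem hBE hem with h | h
      · rw [h]; exact Relation.ReflTransGen.single (CP.adjIn_symm hadjK)
      · rw [h]
  have hodd : ¬ Even ((({Sum.inl vb} ∪ SB) ∩ A).ncard) := by
    intro hev
    refine CP.build_contra ctx.hcov ctx.hIm ({Sum.inl vb} ∪ SB) ?_ ?_
      ⟨_, Or.inl rfl⟩ hwD.1 ?_ ?_ vb ?_ hev
    · rintro x (hx | hx)
      · rw [Set.mem_singleton_iff] at hx; subst hx; exact hvbD.1
      · exact hSBJ hx
    · rintro x (hx | hx)
      · rw [Set.mem_singleton_iff] at hx; subst hx; exact hvbD.2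
      · exact hSBnI x hx
    · rintro (h | h | h)
      · exact hwD.2 h
      · rw [Set.mem_singleton_iff] at h; exact hwb (Sum.inl.inj h)
      · obtain ⟨e, he, -⟩ := hSBe _ h
        exact absurd he (by simp)
    · refine CP.mkSemiInduced hBE ?_ ?_ ?_
      · rintro e (he | he | he)
        · exact absurd he (hIedge e)
        · rw [Set.mem_singleton_iff] at he; exact absurd he (by simp)
        · obtain ⟨e', he', hm'⟩ := hSBe _ he
          rw [Sum.inr.inj he']; exact hm'
      · intro e _
        exact ⟨Or.inl hvaI, Or.inr (Or.inl rfl)⟩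
      · intro _ _
        exact ⟨e0, he0m, Or.inr (Or.inr he0SB)⟩
    · exact hclco _ (Or.inl hvaI) (Or.inr (Or.inl rfl)) (fun x hx => Or.inr (Or.inr hx))
  set F2 : Set G.El := {Sum.inl w} ∪ ({Sum.inl vb} ∪ SB) with hF2def
  set K2 : Set G.El := I.1 ∪ F2 with hK2def
  have hsubK2 : (I.1 ∪ {Sum.inl w} : Set G.El) ⊆ K2 := by
    rintro t (ht | ht)
    · exact Or.inl ht
    · exact Or.inr (Or.inl ht)
  have hvbK2 : Sum.inl vb ∈ K2 := Or.inr (Or.inr (Or.inl rfl))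
  have hSBK2 : SB ⊆ K2 := fun x hx => Or.inr (Or.inr (Or.inr hx))
  have hvaK2 : Sum.inl va ∈ K2 := Or.inl hvaI
  have handleVb : Relation.ReflTransGen (G.adjIn K2) w vb → False := by
    intro hrK
    refine CP.build_contra ctx.hcov ctx.hIm F2 ?_ ?_ ⟨_, Or.inl rfl⟩ hw'D.1 ?_ ?_ vb ?_ ?_
    · rintro t (ht | ht | ht)
      · rw [Set.mem_singleton_iff] at ht; subst ht; exact hwD.1
      · rw [Set.mem_singleton_iff] at ht; subst ht; exact hvbD.1
      · exact hSBJ ht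
    · rintro t (ht | ht | ht)
      · rw [Set.mem_singleton_iff] at ht; subst ht; exact hwD.2
      · rw [Set.mem_singleton_iff] at ht; subst ht; exact hvbD.2
      · exact hSBnI t ht
    · rintro (ht | ht | ht | ht)
      · exact hw'D.2 ht
      · rw [Set.mem_singleton_iff] at ht; exact hww' (Sum.inl.inj ht).symm
      · rw [Set.mem_singleton_iff] at ht; exact hw'b (Sum.inl.inj ht)
      · obtain ⟨e, he, -⟩ := hSBe _ ht
        exact absurd he (by simp)
    · refine CP.mkSemiInduced hBE ?_ ?_ ?_
      · rintro e (he | he | he | he)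
        · exact absurd he (hIedge e)
        · rw [Set.mem_singleton_iff] at he; exact absurd he (by simp)
        · rw [Set.mem_singleton_iff] at he; exact absurd he (by simp)
        · obtain ⟨e', he', hm'⟩ := hSBe _ he
          rw [Sum.inr.inj he']; exact hm'
      · intro e _
        exact ⟨hvaK2, hvbK2⟩
      · intro _ _
        exact ⟨e0, he0m, hSBK2 he0SB⟩
    · rintro t (ht | ht)
      · rw [Set.mem_singleton_iff] at ht; subst ht
        exact CP.mem_componentIn_inl.mpr (CP.reach_symm hrK)
      · exact hclco K2 hvaK2 hvbK2 hSBK2 ht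
    · have hwnot : (Sum.inl w : G.El) ∉ ({Sum.inl vb} ∪ SB) ∩ A := by
        rintro ⟨(h | h), -⟩
        · rw [Set.mem_singleton_iff] at h; exact hwb (Sum.inl.inj h)
        · obtain ⟨e, he, -⟩ := hSBe _ h
          exact absurd he (by simp)
      have hF2A : F2 ∩ A = insert (Sum.inl w) ((({Sum.inl vb} ∪ SB) : Set G.El) ∩ A) := by
        ext t
        constructor
        · rintro ⟨(ht | ht), htA⟩
          · exact Or.inl ht
          · exact Or.inr ⟨ht, htA⟩
        · rintro (ht | ht)
          · subst ht
            exact ⟨Or.inl rfl, hwA⟩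
          · exact ⟨Or.inr ht.1, ht.2⟩
      rw [hF2A, Set.ncard_insert_of_notMem hwnot (Set.toFinite _), Nat.even_add_one]
      exact hodd
  have hnovb : Sum.inl vb ∉ I.1 ∪ {Sum.inl w} := by
    rintro (h | h)
    · exact hvbD.2 h
    · rw [Set.mem_singleton_iff] at h; exact hwb (Sum.inl.inj h).symm
  have hlift : ∀ (S : Set G.El), Sum.inl vb ∉ S → ∀ x y : G.V, G.adjIn J.1 x y →
      Sum.inl x ∈ S → Sum.inl y ∈ S → G.adjIn S x y := by
    intro S hS x y hxy hxS hyS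
    obtain ⟨-, -, e, hor, hmem⟩ := hxy
    by_cases hme : G.Multiple e
    · exfalso
      rcases CP.ends_eq hBE hme hor with ⟨h1, h2⟩ | ⟨h1, h2⟩
      · exact hS (h2 ▸ hyS)
      · exact hS (h1 ▸ hxS)
    · exact ⟨hxS, hyS, e, hor, fun hm => absurd hm hme⟩
  have HL2a : ∀ x y : G.V, G.adjIn J.1 x y → Sum.inl x ∈ I.1 ∪ {Sum.inl w} →
      Sum.inl y ∈ I.1 ∪ {Sum.inl w} → G.adjIn (I.1 ∪ {Sum.inl w}) x y :=
    fun x y hxy hx hy => hlift _ hnovb x y hxy hx hy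
  set Dv : Set G.V := {z | Sum.inl z ∈ J.1 \ I.1 ∧ z ≠ w} with hDv
  have hvert := CP.mk_hvert J.1 I.1 w
  have handleLeft : ∀ b ∈ Dv, ∀ x : G.V, Sum.inl x ∈ I.1 ∪ {Sum.inl w} →
      Relation.ReflTransGen (G.adjIn (I.1 ∪ {Sum.inl w})) w x → G.adjIn J.1 x b → False := by
    intro b hb x hxm hrx hstep
    have hbD : Sum.inl b ∈ J.1 \ I.1 := hb.1
    have hba : b ≠ va := fun h => hbD.2 (by rw [h]; exact hvaI)
    by_cases hbvb : b = vb
    · subst hbvb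
      apply handleVb
      refine (CP.reach_mono hsubK2 hrx).tail ?_
      obtain ⟨-, -, e, hor, hmem⟩ := hstep
      by_cases hme : G.Multiple e
      · exact ⟨hsubK2 hxm, hvbK2, e0, CP.orient hBE hme he0m hor, fun _ => hSBK2 he0SB⟩
      · exact ⟨hsubK2 hxm, hvbK2, e, hor, fun hm => absurd hm hme⟩
    · have hbA := ctx.forceW hbD hba hbvb
      have hnovbp : Sum.inl vb ∉ I.1 ∪ {Sum.inl w, Sum.inl b} := by
        rintro (h | h | h)
        · exact hvbD.2 h
        · exact hwb (Sum.inl.inj h).symm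
        · rw [Set.mem_singleton_iff] at h; exact hbvb (Sum.inl.inj h).symm
      have hrb : Relation.ReflTransGen (G.adjIn (I.1 ∪ {Sum.inl w, Sum.inl b})) w b :=
        (CP.reach_mono CP.pair_sub hrx).tail
          (hlift _ hnovbp x b hstep (CP.pair_sub hxm) (Or.inr (Or.inr rfl)))
      exact CP.pair_contra ctx hwD hbD hb.2.symm hwA hbA (y := Sum.inl vb) hvbD
        (fun h => hwb (Sum.inl.inj h).symm) (fun h => hbvb (Sum.inl.inj h).symm)
        (fun e he => absurd he (hIedge e)) (fun _ hvbK => absurd hvbK hnovbp) hrb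
  obtain ⟨x, hxmem, hxne⟩ := ctx.partner hwD hwA
  obtain ⟨⟨hxC, hxD⟩, hxA⟩ := hxmem
  rcases x with u | e1
  · have hu : u ∈ Dv := ⟨hxD, fun h => hxne (by rw [h])⟩
    rcases CP.FD w Dv hvert HL2a (CP.mem_componentIn_inl.mp hxC) with
      ⟨b, hb, x, hxm, hrx, hstep⟩ | ⟨hc, -⟩
    · exact handleLeft b hb x hxm hrx hstep
    · rcases hc with h | h
      · exact hxD.2 h
      · exact hu.2 h
  · obtain ⟨he1J, hre⟩ := CP.mem_componentIn_inr.mp hxC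
    have he1m := ctx.hP0 e1 he1J
    rcases CP.fst_mem hBE he1m with hfst | hfst
    · rw [hfst] at hre
      rcases CP.FD w Dv hvert HL2a hre with ⟨b, hb, x, hxm, hrx, hstep⟩ | ⟨-, hr⟩
      · exact handleLeft b hb x hxm hrx hstep
      · apply handleVb
        refine (CP.reach_mono hsubK2 hr).tail ?_
        exact CP.adjIn_ab hBE hvaK2 hvbK2 he0m (hSBK2 he0SB)
    · rw [hfst] at hre
      rcases CP.FD w Dv hvert HL2a hre with ⟨b, hb, x, hxm, hrx, hstep⟩ | ⟨hc, -⟩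
      · exact handleLeft b hb x hxm hrx hstep
      · rcases hc with h | h
        · exact hvbD.2 h
        · exact hwb h.symm

end CoverAux6

section CoverAux7

variable {G : Multigraph} {A : Set G.El} {va vb : G.V} {I J : EvenPoset G A}

/-- Step (d): the difference of a cover with `|J ∖ I| ≥ 3` contains a bundle edge. -/
lemma CP.step_d (ctx : CP.Ctx A I J va vb)
    (hB0 : (J.1 \ I.1) ∩ {x : G.El | ∃ e, x = Sum.inr e ∧ G.Multiple e} = ∅) : False := by
  have hBE := ctx.hBE
  have hDvert : ∀ x ∈ J.1 \ I.1, ∃ u : G.V, x = Sum.inl u := by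
    intro x hx
    rcases x with u | e
    · exact ⟨u, rfl⟩
    · exfalso
      have hmem : (Sum.inr e : G.El) ∈ (J.1 \ I.1) ∩
          {x : G.El | ∃ e, x = Sum.inr e ∧ G.Multiple e} := ⟨hx, e, rfl, ctx.hP0 e hx.1⟩
      rw [hB0] at hmem
      exact hmem
  have hE1 : ∀ e, Sum.inr e ∈ J.1 → Sum.inr e ∈ I.1 := by
    intro e he
    by_contra hne
    have hmem : (Sum.inr e : G.El) ∈ (J.1 \ I.1) ∩
        {x : G.El | ∃ e, x = Sum.inr e ∧ G.Multiple e} := ⟨⟨he, hne⟩, e, rfl, ctx.hP0 e he⟩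
    rw [hB0] at hmem
    exact hmem
  have hE2 : Sum.inl va ∈ J.1 → Sum.inl vb ∈ J.1 →
      Sum.inl va ∈ I.1 ∧ Sum.inl vb ∈ I.1 := by
    intro h1 h2
    obtain ⟨e, hem, heJ⟩ := CP.P2 hBE ctx.hJm.1 ctx.hM h1 h2
    exact CP.semiInduced_endpoints hBE ctx.hIm.1 (hE1 e heJ)
  have forceAll : ∀ u : G.V, Sum.inl u ∈ J.1 \ I.1 → Sum.inl u ∈ A := by
    intro u huD
    by_contra huA
    obtain ⟨y, hyD, hyne⟩ : ∃ y ∈ J.1 \ I.1, y ≠ Sum.inl u :=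
      CP.exists_mem_ne (by have := ctx.h3; omega) _
    refine CP.build_contra ctx.hcov ctx.hIm {Sum.inl u} ?_ ?_ ⟨_, rfl⟩ hyD.1 ?_ ?_ u ?_ ?_
    · intro x hx; rw [Set.mem_singleton_iff] at hx; subst hx; exact huD.1
    · intro x hx; rw [Set.mem_singleton_iff] at hx; subst hx; exact huD.2
    · rintro (h | h)
      · exact hyD.2 h
      · exact hyne h
    · refine CP.mkSemiInduced hBE ?_ ?_ ?_
      · rintro e (he | he)
        · exact ctx.hIe e he
        · exact absurd he (by simp)
      · rintro e (he | he)
        · have h := CP.semiInduced_endpoints hBE ctx.hIm.1 he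
          exact ⟨Or.inl h.1, Or.inl h.2⟩
        · exact absurd he (by simp)
      · rintro (ha | ha) (hb | hb)
        · obtain ⟨f, h1, h2⟩ := CP.P2 hBE ctx.hIm.1 ctx.hM ha hb
          exact ⟨f, h1, Or.inl h2⟩
        · rw [Set.mem_singleton_iff] at hb
          have hbu : vb = u := Sum.inl.inj hb
          subst hbu
          exact ((huD.2 (hE2 (ctx.hIJ ha) huD.1).2).elim)
        · rw [Set.mem_singleton_iff] at ha
          have hau : va = u := Sum.inl.inj ha
          subst hau
          exact ((huD.2 (hE2 huD.1 (ctx.hIJ hb)).1).elim)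
        · rw [Set.mem_singleton_iff] at ha
          rw [Set.mem_singleton_iff] at hb
          exact absurd ((Sum.inl.inj ha).trans (Sum.inl.inj hb).symm) ctx.hab
    · intro x hx; rw [Set.mem_singleton_iff] at hx; subst hx
      exact CP.mem_componentIn_inl.mpr Relation.ReflTransGen.refl
    · rw [Set.singleton_inter_eq_empty.mpr huA]; simp
  obtain ⟨u0, hu0D⟩ : ∃ u, Sum.inl u ∈ J.1 \ I.1 := by
    have hne : (J.1 \ I.1).Nonempty :=
      Set.nonempty_of_ncard_ne_zero (by have := ctx.h3; omega)
    obtain ⟨x, hx⟩ := hne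
    obtain ⟨u, rfl⟩ := hDvert x hx
    exact ⟨u, hx⟩
  have hu0A := forceAll u0 hu0D
  obtain ⟨x, hxmem, hxne⟩ := ctx.partner hu0D hu0A
  obtain ⟨⟨hxC, hxD⟩, hxA⟩ := hxmem
  obtain ⟨u1, rfl⟩ := hDvert _ hxD
  have hu1 : u1 ≠ u0 := fun h => hxne (by rw [h])
  set Dv : Set G.V := {z | Sum.inl z ∈ J.1 \ I.1 ∧ z ≠ u0} with hDv
  have hvert := CP.mk_hvert J.1 I.1 u0
  have hlift : ∀ (S : Set G.El), I.1 ⊆ S → ∀ x y : G.V, G.adjIn J.1 x y →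
      Sum.inl x ∈ S → Sum.inl y ∈ S → G.adjIn S x y := by
    intro S hIS x y hxy hxS hyS
    obtain ⟨-, -, e, hor, hmem⟩ := hxy
    by_cases hme : G.Multiple e
    · exact ⟨hxS, hyS, e, hor, fun _ => hIS (hE1 e (hmem hme))⟩
    · exact ⟨hxS, hyS, e, hor, fun hm => absurd hm hme⟩
  have HL2a : ∀ x y : G.V, G.adjIn J.1 x y → Sum.inl x ∈ I.1 ∪ {Sum.inl u0} →
      Sum.inl y ∈ I.1 ∪ {Sum.inl u0} → G.adjIn (I.1 ∪ {Sum.inl u0}) x y :=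
    fun x y hxy hx hy => hlift _ Set.subset_union_left x y hxy hx hy
  rcases CP.FD u0 Dv hvert HL2a (CP.mem_componentIn_inl.mp hxC) with
    ⟨b, hb, x, hxm, hrx, hstep⟩ | ⟨hc, -⟩
  · have hbD : Sum.inl b ∈ J.1 \ I.1 := hb.1
    have hbA := forceAll b hbD
    have hrb : Relation.ReflTransGen (G.adjIn (I.1 ∪ {Sum.inl u0, Sum.inl b})) u0 b :=
      (CP.reach_mono CP.pair_sub hrx).tail
        (hlift _ (fun t ht => Or.inl ht) x b hstep (CP.pair_sub hxm) (Or.inr (Or.inr rfl)))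
    obtain ⟨y, hyD, hy1, hy2⟩ := CP.exists_mem_ne2 ctx.h3 (Sum.inl u0) (Sum.inl b)
    refine CP.pair_contra ctx hu0D hbD hb.2.symm hu0A hbA (y := y) hyD hy1 hy2 ?_ ?_ hrb
    · intro e he
      exact CP.semiInduced_endpoints hBE ctx.hIm.1 he
    · intro ha hb'
      have haJ : Sum.inl va ∈ J.1 := by
        rcases ha with h | h | h
        · exact ctx.hIJ h
        · exact h ▸ hu0D.1
        · rw [Set.mem_singleton_iff] at h; exact h ▸ hbD.1
      have hbJ : Sum.inl vb ∈ J.1 := by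
        rcases hb' with h | h | h
        · exact ctx.hIJ h
        · exact h ▸ hu0D.1
        · rw [Set.mem_singleton_iff] at h; exact h ▸ hbD.1
      obtain ⟨hvaI, hvbI⟩ := hE2 haJ hbJ
      obtain ⟨f, h1, h2⟩ := CP.P2 hBE ctx.hIm.1 ctx.hM hvaI hvbI
      exact ⟨f, h1, Or.inl h2⟩
  · rcases hc with h | h
    · exact hxD.2 h
    · exact hu1 h

end CoverAux7

/-- For a graph `G` of the list `L` with the standard labeling and `A ∈ 𝒜(G)`, every cover
`I ⋖ J` of `P^even_{G,A}` with `|J ∖ I| ≥ 3` satisfies `1 ≤ |(J∖I) ∩ V| ≤ 2`,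
`|(J∖I) ∩ (V ∖ {1,2})| ≤ 1` and `1 ≤ |(J∖I) ∩ B| ≤ 2`. -/
theorem cover_diff_counts (G : Multigraph) (A : Set G.El)
    (hL : InListL G) (hA : G.Admissible A) (L : StdLabeling G A)
    (I J : EvenPoset G A) (hcov : I ⋖ J)
    (h3 : 3 ≤ (J.1 \ I.1).ncard) :
    (1 ≤ ((J.1 \ I.1) ∩ {x : G.El | ∃ w, x = Sum.inl w}).ncard ∧
      ((J.1 \ I.1) ∩ {x : G.El | ∃ w, x = Sum.inl w}).ncard ≤ 2) ∧
    ((J.1 \ I.1) ∩ {x : G.El | ∃ w, x = Sum.inl w ∧ w ≠ L.v 1 ∧ w ≠ L.v 2}).ncard ≤ 1 ∧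
    (1 ≤ ((J.1 \ I.1) ∩ {x : G.El | ∃ e, x = Sum.inr e ∧ G.Multiple e}).ncard ∧
      ((J.1 \ I.1) ∩ {x : G.El | ∃ e, x = Sum.inr e ∧ G.Multiple e}).ncard ≤ 2) := by
  classical
  obtain ⟨em0, hem0⟩ := CP.exists_multiple_of_InListL hL
  set va := L.v 1 with hva
  set vb := L.v 2 with hvb
  have hBE : ∀ e, G.Multiple e ↔
      ((G.fst e = va ∧ G.snd e = vb) ∨ (G.fst e = vb ∧ G.snd e = va)) := L.bundleEnds
  have hab : va ≠ vb := by
    intro h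
    rcases (hBE em0).1 hem0 with h1 | h1
    · exact G.no_loop em0 (h1.1.trans (h.trans h1.2.symm))
    · exact G.no_loop em0 (h1.1.trans (h.symm.trans h1.2.symm))
  have hIm := CP.memAE hA hBE I
  have hJm := CP.memAE hA hBE J
  have ctx : CP.Ctx A I J va vb := ⟨hcov, hIm, hJm, hBE, ⟨em0, hem0⟩, hab, h3⟩
  set D := J.1 \ I.1 with hD
  set Vs : Set G.El := {x : G.El | ∃ w, x = Sum.inl w} with hVs
  set Bs : Set G.El := {x : G.El | ∃ e, x = Sum.inr e ∧ G.Multiple e} with hBs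
  set Vs' : Set G.El := {x : G.El | ∃ w, x = Sum.inl w ∧ w ≠ va ∧ w ≠ vb} with hVs'
  -- (e)
  have hBle2 : (D ∩ Bs).ncard ≤ 2 := CP.edges_le_two ctx
  -- splitting
  have hsplit : D ⊆ (D ∩ Vs) ∪ (D ∩ Bs) := by
    intro x hx
    rcases x with u | e
    · exact Or.inl ⟨hx, u, rfl⟩
    · exact Or.inr ⟨hx, e, rfl, ctx.hP0 e hx.1⟩
  have hcard : D.ncard ≤ (D ∩ Vs).ncard + (D ∩ Bs).ncard :=
    (Set.ncard_le_ncard hsplit (Set.toFinite _)).trans (Set.ncard_union_le _ _)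
  -- (a)
  have hV1 : 1 ≤ (D ∩ Vs).ncard := by omega
  -- (d)
  have hB1 : 1 ≤ (D ∩ Bs).ncard := by
    by_contra hcon
    push_neg at hcon
    exact CP.step_d ctx ((Set.ncard_eq_zero (Set.toFinite (D ∩ Bs))).mp (by omega))
  -- (c)
  have hW1 : (D ∩ Vs').ncard ≤ 1 := by
    by_contra hW
    push_neg at hW
    obtain ⟨x1, hx1, x2, hx2, hne⟩ :=
      (Set.one_lt_ncard (s := D ∩ Vs') (Set.toFinite _)).mp hW
    obtain ⟨w, rfl, hwa, hwb⟩ := hx1.2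
    obtain ⟨w', rfl, hw'a, hw'b⟩ := hx2.2
    have hww' : w ≠ w' := fun h => hne (by rw [h])
    obtain ⟨z0, hz0⟩ := (Set.ncard_pos (Set.toFinite (D ∩ Bs))).mp (by omega)
    obtain ⟨e0, rfl, he0m⟩ := hz0.2
    have he0D : Sum.inr e0 ∈ J.1 \ I.1 := hz0.1
    have hwD : Sum.inl w ∈ J.1 \ I.1 := hx1.1
    have hw'D : Sum.inl w' ∈ J.1 \ I.1 := hx2.1
    obtain ⟨hvaJ, hvbJ⟩ := CP.semiInduced_endpoints hBE hJm.1 he0D.1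
    by_cases hvaI : Sum.inl va ∈ I.1 <;> by_cases hvbI : Sum.inl vb ∈ I.1
    · exact CP.case_both ctx hvaI hvbI hwD hw'D hww' he0D
    · exact CP.case_mid ctx hvaI ⟨hvbJ, hvbI⟩ hwD hw'D hww' hwa hwb hw'b he0D
    · exact CP.case_mid ctx.symm hvbI ⟨hvaJ, hvaI⟩ hwD hw'D hww' hwb hwa hw'a he0D
    · exact CP.case_bb ctx ⟨hvaJ, hvaI⟩ ⟨hvbJ, hvbI⟩ hwD hwa hwb
  -- (b)
  have hV2 : (D ∩ Vs).ncard ≤ 2 := by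
    by_contra hV
    push_neg at hV
    have hsub : D ∩ Vs ⊆ (D ∩ Vs') ∪ {Sum.inl va, Sum.inl vb} := by
      rintro x ⟨hxD, u, rfl⟩
      by_cases hua : u = va
      · exact Or.inr (Or.inl (by rw [hua]))
      by_cases hub : u = vb
      · exact Or.inr (Or.inr (by rw [hub]; exact rfl))
      · exact Or.inl ⟨hxD, u, rfl, hua, hub⟩
    have hpairle : ({Sum.inl va, Sum.inl vb} : Set G.El).ncard ≤ 2 :=
      (Set.ncard_insert_le _ _).trans (by rw [Set.ncard_singleton])
    have hun := Set.ncard_union_le (D ∩ Vs') ({Sum.inl va, Sum.inl vb} : Set G.El)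
    have hle := Set.ncard_le_ncard hsub (Set.toFinite _)
    have hvaD : Sum.inl va ∈ D := by
      by_contra hva'
      have hsub2 : D ∩ Vs ⊆ (D ∩ Vs') ∪ {Sum.inl vb} := by
        intro x hx
        rcases hsub hx with h | h | h
        · exact Or.inl h
        · exact absurd (h ▸ hx.1) hva'
        · exact Or.inr h
      have h1 := Set.ncard_le_ncard hsub2 (Set.toFinite _)
      have h2 := Set.ncard_union_le (D ∩ Vs') ({Sum.inl vb} : Set G.El)
      rw [Set.ncard_singleton] at h2
      omega
    have hvbD : Sum.inl vb ∈ D := by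
      by_contra hvb'
      have hsub2 : D ∩ Vs ⊆ (D ∩ Vs') ∪ {Sum.inl va} := by
        intro x hx
        rcases hsub hx with h | h | h
        · exact Or.inl h
        · exact Or.inr h
        · rw [Set.mem_singleton_iff] at h
          exact absurd (h ▸ hx.1) hvb'
      have h1 := Set.ncard_le_ncard hsub2 (Set.toFinite _)
      have h2 := Set.ncard_union_le (D ∩ Vs') ({Sum.inl va} : Set G.El)
      rw [Set.ncard_singleton] at h2
      omega
    obtain ⟨z, hz⟩ := (Set.ncard_pos (Set.toFinite (D ∩ Vs'))).mp (by omega)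
    obtain ⟨w, rfl, hwa, hwb⟩ := hz.2
    exact CP.case_bb ctx hvaD hvbD hz.1 hwa hwb
  exact ⟨⟨hV1, hV2⟩, hW1, ⟨hB1, hBle2⟩⟩
end

section
/- For every integer k ≥ 2, the sum of C_i · C_j · C_t over all triples of nonnegative integers (i, j, t) with i + j + t = k − 2 equals C_k − C_{k−1}. (Equivalently, in the indexing of the paper: ∑_{v_1 odd, 3 ≤ v_1 ≤ 2k−1} ∑_{v_2 even, v_1 < v_2 ≤ 2k} C_{(v_1−3)/2} · C_{(v_2−v_1−1)/2} · C_{(2k−v_2)/2} = C_k − C_{k−1}.) -/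
/-- For every `k ≥ 2`, the sum of `C_i · C_j · C_t` over all triples of nonnegative
integers with `i + j + t = k - 2` equals `C_k - C_{k-1}`, where `C` denotes the Catalan
numbers. -/
theorem catalan_triple_sum (k : ℕ) (hk : 2 ≤ k) :
    (∑ i ∈ Finset.range (k - 1), ∑ j ∈ Finset.range (k - 1 - i),
        catalan i * catalan j * catalan (k - 2 - i - j)) =
      catalan k - catalan (k - 1) := by
  obtain ⟨n, rfl⟩ : ∃ n, k = n + 2 := ⟨k - 2, by omega⟩
  have h1 : ∀ m : ℕ, ∑ j ∈ Finset.range (m + 1), catalan j * catalan (m - j)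
      = catalan (m + 1) := by
    intro m
    rw [catalan_succ]
    rw [Finset.sum_range fun i => catalan i * catalan (m - i)]
  have key : (∑ i ∈ Finset.range (n + 1), ∑ j ∈ Finset.range (n + 1 - i),
        catalan i * catalan j * catalan (n - i - j))
      = ∑ i ∈ Finset.range (n + 1), catalan i * catalan (n + 1 - i) := by
    refine Finset.sum_congr rfl fun i hi => ?_
    simp only [Finset.mem_range] at hi
    have e1 : n + 1 - i = (n - i) + 1 := by omega
    rw [e1, ← h1 (n - i), Finset.mul_sum]
    refine Finset.sum_congr rfl fun j hj => ?_
    ring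
  have h2 : catalan (n + 2) = (∑ i ∈ Finset.range (n + 1), catalan i * catalan (n + 1 - i))
      + catalan (n + 1) := by
    have h := h1 (n + 1)
    rw [Finset.sum_range_succ] at h
    simp only [Nat.sub_self, catalan_zero, mul_one] at h
    rw [show n + 2 = n + 1 + 1 from rfl, ← h]
  simp only [show n + 2 - 1 = n + 1 from rfl, show n + 2 - 2 = n from rfl]
  rw [key]
  omega
end
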